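/- arXiv:math/9902158 — 3 statements merged into one kernel-verified Lean document; each statement's English description precedes it below -/
import Mathlib

section
/- Let f be a holomorphic germ fixing 0 with f'(0) = ρ ≠ 0, and let j ∈ ℤ. Then the pullback satisfies f^*(dζ²/ζ^{j+2}) = ρ^{−j} dζ²/ζ^{j+2} + O(dζ²/ζ^{j+1}). Consequently, if ρ^j ≠ 1 for all 1 ≤ j, then the only polar parts of order ≤ −2 invariant under f^* are multiples of dζ²/ζ². -/
open Filter Topology

private lemma aux_zpow_analytic {g : ℂ → ℂ} (hg : AnalyticAt ℂ g 0) (h0 : g 0 ≠ 0) (m : ℤ) :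
    AnalyticAt ℂ (fun ζ => g ζ ^ m) 0 := by
  cases m with
  | ofNat k => simpa using hg.fun_pow k
  | negSucc k => simpa [zpow_negSucc] using (hg.fun_pow (k+1)).fun_inv (pow_ne_zero _ h0)

private lemma aux_factor {u : ℂ → ℂ} (hu : AnalyticAt ℂ u 0) (h0 : u 0 = 0) :
    ∃ v : ℂ → ℂ, AnalyticAt ℂ v 0 ∧ v 0 = deriv u 0 ∧ ∀ ζ, u ζ = ζ * v ζ := by
  refine ⟨dslope u 0, ?_, dslope_same u 0, fun ζ => ?_⟩
  · obtain ⟨p, hp⟩ := hu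
    exact ⟨p.fslope, hp.has_fpower_series_dslope_fslope⟩
  · have h := sub_smul_dslope u 0 ζ
    simp only [sub_zero, h0, smul_eq_mul] at h
    exact h.symm

private lemma aux_deriv_analytic {f : ℂ → ℂ} (hf : AnalyticAt ℂ f 0) :
    AnalyticAt ℂ (deriv f) 0 := by
  have : AnalyticAt ℂ (fun x => ContinuousLinearMap.apply ℂ ℂ (1:ℂ) (fderiv ℂ f x)) 0 :=
    ((ContinuousLinearMap.apply ℂ ℂ (1:ℂ)).analyticAt _).comp hf.fderiv
  simpa [ContinuousLinearMap.apply] using this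

private lemma aux_pow_mul_zpow_neg {ζ : ℂ} (hζ : ζ ≠ 0) {m k : ℕ} (h : k ≤ m) :
    ζ ^ m * ζ ^ (-(k:ℤ)) = ζ ^ (m - k) := by
  rw [← zpow_natCast ζ m, ← zpow_natCast ζ (m-k), ← zpow_add₀ hζ]
  congr 1
  omega

/-- Let `f` be a holomorphic germ fixing `0` with `f'(0) = ρ ≠ 0`.
(1) For every `j ∈ ℤ`, `f^*(dζ²/ζ^{j+2}) = ρ^{−j} dζ²/ζ^{j+2} + O(dζ²/ζ^{j+1})`, where the
pullback of the quadratic differential `g dζ²` has coefficient `g(f(ζ)) f'(ζ)²`.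
(2) Consequently, if `ρ^j ≠ 1` for all `j ≥ 1`, then any polar part
`∑_j c_j dζ²/ζ^{j+2}` invariant under `f^*` (i.e. whose pullback differs from it by
`O(dζ²/ζ)`) is a multiple of `dζ²/ζ²`, i.e. `c_j = 0` for `j ≥ 1`. -/
theorem pullback_polar_part (f : ℂ → ℂ) (ρ : ℂ)
    (hf : AnalyticAt ℂ f 0) (hf0 : f 0 = 0) (hρ : deriv f 0 = ρ) (hρ0 : ρ ≠ 0) :
    (∀ j : ℤ, ∃ h : ℂ → ℂ, AnalyticAt ℂ h 0 ∧ ∀ᶠ ζ in 𝓝[≠] (0 : ℂ),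
        (f ζ) ^ (-(j + 2)) * (deriv f ζ) ^ 2
          = ρ ^ (-j) * ζ ^ (-(j + 2)) + ζ ^ (-(j + 1)) * h ζ) ∧
    ((∀ j : ℕ, 1 ≤ j → ρ ^ j ≠ 1) →
      ∀ c : ℕ → ℂ, (Function.support c).Finite →
        (∃ h : ℂ → ℂ, AnalyticAt ℂ h 0 ∧ ∀ᶠ ζ in 𝓝[≠] (0 : ℂ),
          (∑ᶠ j : ℕ, c j * (f ζ) ^ (-((j : ℤ) + 2))) * (deriv f ζ) ^ 2
            = (∑ᶠ j : ℕ, c j * ζ ^ (-((j : ℤ) + 2))) + ζ⁻¹ * h ζ) →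
        ∀ j : ℕ, 1 ≤ j → c j = 0) := by
  obtain ⟨g, hg, hg0, hfac⟩ := aux_factor hf hf0
  have hgρ : g 0 = ρ := by rw [hg0, hρ]
  have hgne0 : g 0 ≠ 0 := by rw [hgρ]; exact hρ0
  have hderiv : AnalyticAt ℂ (deriv f) 0 := aux_deriv_analytic hf
  have hgev : ∀ᶠ ζ in 𝓝[≠] (0:ℂ), g ζ ≠ 0 :=
    (hg.continuousAt.eventually_ne hgne0).filter_mono nhdsWithin_le_nhds
  have part1 : ∀ j : ℤ, ∃ h : ℂ → ℂ, AnalyticAt ℂ h 0 ∧ ∀ᶠ ζ in 𝓝[≠] (0 : ℂ),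
      (f ζ) ^ (-(j + 2)) * (deriv f ζ) ^ 2
        = ρ ^ (-j) * ζ ^ (-(j + 2)) + ζ ^ (-(j + 1)) * h ζ := by
    intro j
    set φ : ℂ → ℂ := fun ζ => g ζ ^ (-(j+2)) * (deriv f ζ)^2 with hφdef
    have hφan : AnalyticAt ℂ φ 0 := (aux_zpow_analytic hg hgne0 _).mul (hderiv.pow 2)
    have hφ0 : φ 0 = ρ ^ (-j) := by
      show g 0 ^ (-(j+2)) * (deriv f 0)^2 = ρ ^ (-j)
      rw [hgρ, hρ, ← zpow_natCast ρ 2, ← zpow_add₀ hρ0]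
      congr 1
      push_cast
      ring
    have hψan : AnalyticAt ℂ (fun ζ => φ ζ - ρ^(-j)) 0 := hφan.sub analyticAt_const
    obtain ⟨h, hhan, _, hhfac⟩ := aux_factor hψan (by simp [hφ0])
    refine ⟨h, hhan, ?_⟩
    filter_upwards [hgev, self_mem_nhdsWithin] with ζ hgζ hζmem
    have hζ : ζ ≠ 0 := hζmem
    have hφζ : φ ζ = ρ^(-j) + ζ * h ζ := by
      have := hhfac ζ
      linear_combination this
    have h1 : f ζ ^ (-(j+2)) = ζ^(-(j+2)) * g ζ ^ (-(j+2)) := by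
      rw [hfac ζ, mul_zpow]
    have h2 : ζ^(-(j+2)) * ζ = ζ^(-(j+1)) := by
      rw [← zpow_add_one₀ hζ]
      congr 1
      ring
    calc f ζ ^ (-(j+2)) * (deriv f ζ)^2 = ζ^(-(j+2)) * φ ζ := by rw [h1]; ring
      _ = ζ^(-(j+2)) * (ρ^(-j) + ζ * h ζ) := by rw [hφζ]
      _ = ρ^(-j) * ζ^(-(j+2)) + (ζ^(-(j+2)) * ζ) * h ζ := by ring
      _ = ρ^(-j) * ζ^(-(j+2)) + ζ^(-(j+1)) * h ζ := by rw [h2]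
  refine ⟨part1, ?_⟩
  intro hone c hc hinv j hj1
  by_contra hcj
  obtain ⟨h, hhan, hev⟩ := hinv
  choose H Han Hev using part1
  set T := hc.toFinset with hT
  have hmemT : ∀ i : ℕ, i ∈ T ↔ c i ≠ 0 := fun i => hc.mem_toFinset
  have hjT : j ∈ T := (hmemT j).mpr hcj
  have hTne : T.Nonempty := ⟨j, hjT⟩
  set N := T.max' hTne with hNdef
  have hNmem : N ∈ T := T.max'_mem hTne
  have hcN : c N ≠ 0 := (hmemT N).mp hNmem
  have hN1 : 1 ≤ N := le_trans hj1 (T.le_max' j hjT)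
  have hle : ∀ i ∈ T, i ≤ N := fun i hi => T.le_max' i hi
  -- the four continuous pieces
  set A : ℂ → ℂ := fun ζ => ∑ i ∈ T, c i * ρ^(-(i:ℤ)) * ζ^(N - i) with hA
  set B : ℂ → ℂ := fun ζ => ∑ i ∈ T, c i * ζ^(N - i) with hB
  set C : ℂ → ℂ := fun ζ => ∑ i ∈ T, c i * ζ^(N + 1 - i) * H (i:ℤ) ζ with hC
  set D : ℂ → ℂ := fun ζ => ζ^(N+1) * h ζ with hD
  have hallev : ∀ᶠ ζ in 𝓝[≠] (0:ℂ), ∀ i ∈ T,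
      (f ζ) ^ (-((i:ℤ) + 2)) * (deriv f ζ) ^ 2
        = ρ ^ (-(i:ℤ)) * ζ ^ (-((i:ℤ) + 2)) + ζ ^ (-((i:ℤ) + 1)) * H (i:ℤ) ζ :=
    T.eventually_all.mpr fun i _ => Hev (i:ℤ)
  have heq : ∀ᶠ ζ in 𝓝[≠] (0:ℂ), A ζ + C ζ = B ζ + D ζ := by
    filter_upwards [hallev, hev, self_mem_nhdsWithin] with ζ hall hζeq hζmem
    have hζ : ζ ≠ 0 := hζmem
    have hs1 : (∑ᶠ i : ℕ, c i * (f ζ) ^ (-((i:ℤ)+2)))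
        = ∑ i ∈ T, c i * (f ζ) ^ (-((i:ℤ)+2)) := by
      apply finsum_eq_finset_sum_of_support_subset
      intro x hx
      have : c x ≠ 0 := fun h0 => hx (by simp [h0])
      exact hc.mem_toFinset.mpr this
    have hs2 : (∑ᶠ i : ℕ, c i * ζ ^ (-((i:ℤ)+2)))
        = ∑ i ∈ T, c i * ζ ^ (-((i:ℤ)+2)) := by
      apply finsum_eq_finset_sum_of_support_subset
      intro x hx
      have : c x ≠ 0 := fun h0 => hx (by simp [h0])
      exact hc.mem_toFinset.mpr this
    rw [hs1, hs2] at hζeq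
    have key := congrArg (fun t => ζ^(N+2) * t) hζeq
    have hp1 : ∀ i ∈ T, ζ^(N+2) * ζ ^ (-((i:ℤ)+2)) = ζ^(N-i) := by
      intro i hi
      have hcast : (-((i:ℤ)+2)) = -(((i+2:ℕ)):ℤ) := by push_cast; ring
      have hiN := hle i hi
      rw [hcast, aux_pow_mul_zpow_neg hζ (by omega : i+2 ≤ N+2)]
      congr 1
      omega
    have hp2 : ∀ i ∈ T, ζ^(N+2) * ζ ^ (-((i:ℤ)+1)) = ζ^(N+1-i) := by
      intro i hi
      have hcast : (-((i:ℤ)+1)) = -(((i+1:ℕ)):ℤ) := by push_cast; ring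
      rw [hcast, aux_pow_mul_zpow_neg hζ (by have := hle i hi; omega : i+1 ≤ N+2)]
      congr 1
      omega
    have lhs_eq : ζ^(N+2) * ((∑ i ∈ T, c i * (f ζ) ^ (-((i:ℤ)+2))) * (deriv f ζ)^2)
        = A ζ + C ζ := by
      rw [Finset.sum_mul, Finset.mul_sum, hA, hC, ← Finset.sum_add_distrib]
      apply Finset.sum_congr rfl
      intro i hi
      calc ζ^(N+2) * (c i * (f ζ) ^ (-((i:ℤ)+2)) * (deriv f ζ)^2)
          = c i * (ζ^(N+2) * ((f ζ) ^ (-((i:ℤ)+2)) * (deriv f ζ)^2)) := by ring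
        _ = c i * (ζ^(N+2) * (ρ ^ (-(i:ℤ)) * ζ ^ (-((i:ℤ) + 2)) + ζ ^ (-((i:ℤ) + 1)) * H (i:ℤ) ζ)) := by
            rw [hall i hi]
        _ = c i * ρ^(-(i:ℤ)) * (ζ^(N+2) * ζ ^ (-((i:ℤ)+2)))
              + c i * (ζ^(N+2) * ζ ^ (-((i:ℤ)+1))) * H (i:ℤ) ζ := by ring
        _ = c i * ρ^(-(i:ℤ)) * ζ^(N-i) + c i * ζ^(N+1-i) * H (i:ℤ) ζ := by
            rw [hp1 i hi, hp2 i hi]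
    have rhs_eq : ζ^(N+2) * ((∑ i ∈ T, c i * ζ ^ (-((i:ℤ)+2))) + ζ⁻¹ * h ζ)
        = B ζ + D ζ := by
      rw [mul_add, Finset.mul_sum, hB, hD]
      congr 1
      · apply Finset.sum_congr rfl
        intro i hi
        calc ζ^(N+2) * (c i * ζ ^ (-((i:ℤ)+2)))
            = c i * (ζ^(N+2) * ζ ^ (-((i:ℤ)+2))) := by ring
          _ = c i * ζ^(N-i) := by rw [hp1 i hi]
      · have hzz : ζ^(N+2) * ζ⁻¹ = ζ^(N+1) := by
          field_simp
          ring
        rw [← mul_assoc, hzz]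
    rw [lhs_eq, rhs_eq] at key
    exact key
  -- continuity
  have hAC : ContinuousAt (fun ζ => A ζ + C ζ) 0 := by
    apply ContinuousAt.add
    · apply tendsto_finset_sum
      intro i _
      exact (continuousAt_const.mul (continuousAt_pow _ _))
    · apply tendsto_finset_sum
      intro i _
      exact ((continuousAt_const.mul (continuousAt_pow _ _)).mul
        (Han (i:ℤ)).continuousAt)
  have hBD : ContinuousAt (fun ζ => B ζ + D ζ) 0 := by
    apply ContinuousAt.add
    · apply tendsto_finset_sum
      intro i _
      exact (continuousAt_const.mul (continuousAt_pow _ _))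
    · exact (continuousAt_pow _ _).mul hhan.continuousAt
  have hACt : Tendsto (fun ζ => A ζ + C ζ) (𝓝[≠] (0:ℂ)) (𝓝 (A 0 + C 0)) :=
    hAC.continuousWithinAt.tendsto
  have hBDt : Tendsto (fun ζ => B ζ + D ζ) (𝓝[≠] (0:ℂ)) (𝓝 (B 0 + D 0)) :=
    hBD.continuousWithinAt.tendsto
  have hval : A 0 + C 0 = B 0 + D 0 :=
    tendsto_nhds_unique (hACt.congr' heq) hBDt
  have hA0 : A 0 = c N * ρ^(-(N:ℤ)) := by
    rw [hA]
    simp only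
    rw [Finset.sum_eq_single N]
    · simp
    · intro i hi hine
      have : N - i ≠ 0 := by have := hle i hi; omega
      simp [zero_pow this]
    · intro habs
      exact absurd hNmem habs
  have hB0 : B 0 = c N := by
    rw [hB]
    simp only
    rw [Finset.sum_eq_single N]
    · simp
    · intro i hi hine
      have : N - i ≠ 0 := by have := hle i hi; omega
      simp [zero_pow this]
    · intro habs
      exact absurd hNmem habs
  have hC0 : C 0 = 0 := by
    rw [hC]
    simp only
    apply Finset.sum_eq_zero
    intro i hi
    have : N + 1 - i ≠ 0 := by have := hle i hi; omega
    simp [zero_pow this]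
  have hD0 : D 0 = 0 := by
    rw [hD]
    simp
  rw [hA0, hB0, hC0, hD0, add_zero, add_zero] at hval
  have hρN : ρ ^ (-(N:ℤ)) = 1 := by
    have : c N * ρ^(-(N:ℤ)) = c N * 1 := by rw [mul_one]; exact hval
    exact mul_left_cancel₀ hcN this
  rw [zpow_neg, inv_eq_one, zpow_natCast] at hρN
  exact hone N hN1 hρN
end

section
/- Let f(ζ) = ρ(ζ + ζ^{N+1} + αζ^{2N+1}) + O(ζ^{2N+2}) be a parabolic germ with ρ a primitive n-th root of unity, N = νn, and β = (N+1)/2 − α. Then f^*(dζ²/ζ^{j+2}) = ρ̄^j (1 + (2N−j)ζ^N + (3N² − (5/2)jN + (1/2)j² + (j−4N)β)ζ^{2N} + O(ζ^{2N+1})) · dζ²/ζ^{j+2}. -/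
open Filter Topology

set_option maxRecDepth 8000
set_option maxHeartbeats 1000000

lemma natExpand (k : ℕ) : ∃ E : ℂ → ℂ, AnalyticAt ℂ E 0 ∧ ∀ u : ℂ,
    (1+u)^k = 1 + (k:ℂ)*u + ((k:ℂ)*((k:ℂ)-1)/2)*u^2 + u^3 * E u := by
  induction k with
  | zero => exact ⟨fun _ => 0, analyticAt_const, by intro u; simp⟩
  | succ k ih =>
    obtain ⟨E, hE, hid⟩ := ih
    refine ⟨fun u => ((k:ℂ)*((k:ℂ)-1)/2) + (1+u) * E u, analyticAt_const.add
      ((analyticAt_const.add analyticAt_id).mul hE), fun u => ?_⟩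
    rw [pow_succ, hid u]
    push_cast
    ring

lemma intExpand (m : ℤ) : ∃ E : ℂ → ℂ, AnalyticAt ℂ E 0 ∧ ∀ᶠ u in 𝓝 (0:ℂ),
    (1+u)^m = 1 + (m:ℂ)*u + ((m:ℂ)*((m:ℂ)-1)/2)*u^2 + u^3 * E u := by
  cases m with
  | ofNat k =>
    obtain ⟨E, hE, hid⟩ := natExpand k
    refine ⟨E, hE, Eventually.of_forall fun u => ?_⟩
    rw [Int.ofNat_eq_coe, zpow_natCast, hid u]
    push_cast
    ring
  | negSucc k =>
    obtain ⟨e, he, hid⟩ := natExpand (k+1)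
    set K : ℂ := ((k:ℂ)+1) with hK
    set c : ℂ := (((k:ℕ)+1:ℂ)*(((k:ℕ)+1:ℂ)-1)/2) with hc
    refine ⟨fun u => -(e u) + (c + u * e u) * ((K + c*u + u^2*e u) + K)
      - (K + c*u + u^2*e u)^3 * ((1+u)^(k+1))⁻¹, ?_, ?_⟩
    · have hSa : AnalyticAt ℂ (fun u : ℂ => ((1+u)^(k+1))⁻¹) 0 := by
        refine ((analyticAt_const.add analyticAt_id).pow _).inv ?_
        simp
      have h1 : AnalyticAt ℂ (fun u : ℂ => K + c*u + u^2*e u) 0 :=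
        (analyticAt_const.add (analyticAt_const.mul analyticAt_id)).add
          ((analyticAt_id.pow _).mul he)
      exact ((he.neg).add (((analyticAt_const.add (analyticAt_id.mul he)).mul
        (h1.add analyticAt_const)))).sub ((h1.pow _).mul hSa)
    · have hne : ∀ᶠ u in 𝓝 (0:ℂ), (1:ℂ)+u ≠ 0 := by
        have : ContinuousAt (fun u : ℂ => 1+u) 0 := by fun_prop
        exact this.eventually_ne (by simp)
      filter_upwards [hne] with u hu
      have hPne : ((1:ℂ)+u)^(k+1) ≠ 0 := pow_ne_zero _ hu
      have hm : ((Int.negSucc k : ℤ) : ℂ) = -K := by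
        rw [hK]; push_cast [Int.negSucc_eq]; ring
      rw [zpow_negSucc, hm]
      have key : (1 + (-K)*u + ((-K)*((-K)-1)/2)*u^2 + u^3 *
          (-(e u) + (c + u * e u) * ((K + c*u + u^2*e u) + K)
            - (K + c*u + u^2*e u)^3 * ((1+u)^(k+1))⁻¹)) * ((1+u)^(k+1)) = 1 := by
        rw [hid u]
        have hcancel : ((1+u)^(k+1))⁻¹ * ((1+u)^(k+1)) = 1 := inv_mul_cancel₀ hPne
        rw [hid u] at hcancel
        push_cast at hcancel ⊢
        rw [hK, hc]
        linear_combination (-(u^3 * (((k:ℂ)+1) + ((k:ℂ)+1)*(k:ℂ)/2*u + u^2*e u)^3)) * hcancel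
      exact (eq_inv_of_mul_eq_one_left key).symm

/-- Truncated expansion up to order `2M+2` with analytic remainder. -/
def Ok (M : ℕ) (a0 a1 a2 : ℂ) (g : ℂ → ℂ) : Prop :=
  ∃ h : ℂ → ℂ, AnalyticAt ℂ h 0 ∧ ∀ᶠ ζ in 𝓝 (0:ℂ),
    g ζ = a0 + a1 * ζ^(M+1) + a2 * ζ^(2*M+2) + ζ^(2*M+3) * h ζ

lemma Ok.mul {M : ℕ} {a0 a1 a2 b0 b1 b2 : ℂ} {g1 g2 : ℂ → ℂ}
    (h1 : Ok M a0 a1 a2 g1) (h2 : Ok M b0 b1 b2 g2) :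
    Ok M (a0*b0) (a0*b1+a1*b0) (a0*b2+a1*b1+a2*b0) (fun ζ => g1 ζ * g2 ζ) := by
  obtain ⟨p, hp, he1⟩ := h1
  obtain ⟨q, hq, he2⟩ := h2
  refine ⟨fun ζ => (a1*b2+a2*b1)*ζ^M + a2*b2*ζ^(2*M+1)
      + p ζ*(b0+b1*ζ^(M+1)+b2*ζ^(2*M+2)) + q ζ*(a0+a1*ζ^(M+1)+a2*ζ^(2*M+2))
      + ζ^(2*M+3)*(p ζ*q ζ), ?_, ?_⟩
  · exact ((((analyticAt_const.mul (analyticAt_id.pow _)).add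
      (analyticAt_const.mul (analyticAt_id.pow _))).add
      (hp.mul ((analyticAt_const.add (analyticAt_const.mul (analyticAt_id.pow _))).add
        (analyticAt_const.mul (analyticAt_id.pow _))))).add
      (hq.mul ((analyticAt_const.add (analyticAt_const.mul (analyticAt_id.pow _))).add
        (analyticAt_const.mul (analyticAt_id.pow _))))).add
      ((analyticAt_id.pow _).mul (hp.mul hq))
  · filter_upwards [he1, he2] with ζ e1 e2
    rw [e1, e2]; ring

lemma Ok.add {M : ℕ} {a0 a1 a2 b0 b1 b2 : ℂ} {g1 g2 : ℂ → ℂ}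
    (h1 : Ok M a0 a1 a2 g1) (h2 : Ok M b0 b1 b2 g2) :
    Ok M (a0+b0) (a1+b1) (a2+b2) (fun ζ => g1 ζ + g2 ζ) := by
  obtain ⟨p, hp, he1⟩ := h1
  obtain ⟨q, hq, he2⟩ := h2
  refine ⟨fun ζ => p ζ + q ζ, hp.add hq, ?_⟩
  filter_upwards [he1, he2] with ζ e1 e2
  rw [e1, e2]; ring

lemma Ok.smul {M : ℕ} {a0 a1 a2 : ℂ} {g : ℂ → ℂ} (c : ℂ) (h : Ok M a0 a1 a2 g) :
    Ok M (c*a0) (c*a1) (c*a2) (fun ζ => c * g ζ) := by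
  obtain ⟨p, hp, he⟩ := h
  exact ⟨fun ζ => c * p ζ, analyticAt_const.mul hp, by
    filter_upwards [he] with ζ e; rw [e]; ring⟩

lemma Ok.const {M : ℕ} (c : ℂ) : Ok M c 0 0 (fun _ => c) :=
  ⟨fun _ => 0, analyticAt_const, by filter_upwards with ζ; ring⟩

lemma Ok.mul_analytic {M : ℕ} {g w : ℂ → ℂ} (h : Ok M 0 0 0 g) (hw : AnalyticAt ℂ w 0) :
    Ok M 0 0 0 (fun ζ => g ζ * w ζ) := by
  obtain ⟨p, hp, he⟩ := h
  exact ⟨fun ζ => p ζ * w ζ, hp.mul hw, by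
    filter_upwards [he] with ζ e; rw [e]; ring⟩

lemma Ok.congr {M : ℕ} {a0 a1 a2 b0 b1 b2 : ℂ} {g g' : ℂ → ℂ}
    (h : Ok M a0 a1 a2 g) (h0 : a0 = b0) (h1 : a1 = b1) (h2 : a2 = b2)
    (hg : ∀ᶠ ζ in 𝓝 (0:ℂ), g ζ = g' ζ) : Ok M b0 b1 b2 g' := by
  obtain ⟨p, hp, he⟩ := h
  exact ⟨p, hp, by filter_upwards [he, hg] with ζ e eg; rw [← eg, e, h0, h1, h2]⟩

/-- Let `f(ζ) = ρ(ζ + ζ^{N+1} + αζ^{2N+1}) + O(ζ^{2N+2})` be a parabolic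
germ with `ρ` a primitive `n`-th root of unity, `N = νn`, and `β = (N+1)/2 − α`.  Then
`f^*(dζ²/ζ^{j+2}) = ρ̄^j (1 + (2N−j)ζ^N + (3N² − (5/2)jN + (1/2)j² + (j−4N)β)ζ^{2N}
+ O(ζ^{2N+1})) dζ²/ζ^{j+2}` for every integer `j`. -/
theorem parabolic_pullback_expansion (f : ℂ → ℂ) (n N ν : ℕ) (ρ α β : ℂ)
    (hn : 0 < n) (hν : 0 < ν) (hN : N = ν * n)
    (hρ : IsPrimitiveRoot ρ n)
    (hβ : β = ((N : ℂ) + 1) / 2 - α)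
    (hf : ∃ h : ℂ → ℂ, AnalyticAt ℂ h 0 ∧ ∀ᶠ ζ in 𝓝 (0 : ℂ),
      f ζ = ρ * (ζ + ζ ^ (N + 1) + α * ζ ^ (2 * N + 1)) + ζ ^ (2 * N + 2) * h ζ) :
    ∀ j : ℤ, ∃ h : ℂ → ℂ, AnalyticAt ℂ h 0 ∧ ∀ᶠ ζ in 𝓝[≠] (0 : ℂ),
      (f ζ) ^ (-(j + 2)) * (deriv f ζ) ^ 2
        = (starRingEnd ℂ ρ) ^ j *
            (1 + (2 * (N : ℂ) - (j : ℂ)) * ζ ^ N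
              + (3 * (N : ℂ) ^ 2 - 5 / 2 * (j : ℂ) * (N : ℂ) + 1 / 2 * (j : ℂ) ^ 2
                  + ((j : ℂ) - 4 * (N : ℂ)) * β) * ζ ^ (2 * N)
              + ζ ^ (2 * N + 1) * h ζ) * ζ ^ (-(j + 2)) := by
  intro j
  obtain ⟨h0, h0an, hEq⟩ := hf
  have hρ0 : ρ ≠ 0 := hρ.ne_zero hn.ne'
  have hri : ρ * ρ⁻¹ = 1 := mul_inv_cancel₀ hρ0
  have habs : ‖ρ‖ = 1 := Complex.norm_eq_one_of_pow_eq_one hρ.pow_eq_one hn.ne'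
  have hconj : (starRingEnd ℂ ρ) = ρ⁻¹ := (Complex.inv_eq_conj habs).symm
  have hρpow : ρ ^ (-(j+2)) * ρ ^ (2:ℕ) = (starRingEnd ℂ ρ) ^ j := by
    rw [hconj, inv_zpow, ← zpow_neg, ← zpow_natCast ρ 2, ← zpow_add₀ hρ0]
    congr 1
    push_cast
    ring
  have hNpos : 0 < N := hN ▸ Nat.mul_pos hν hn
  obtain ⟨M, hM⟩ : ∃ M, N = M + 1 := ⟨N - 1, by omega⟩
  subst hM
  -- the derivative of h0 is analytic
  have hdh0 : AnalyticAt ℂ (deriv h0) 0 := by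
    obtain ⟨s, hs, hs2⟩ := h0an.exists_mem_nhds_analyticOnNhd
    exact hs2.deriv 0 (mem_of_mem_nhds hs)
  -- the expansion of (1+u)^(-(j+2))
  obtain ⟨E, hEan, hEexp⟩ := intExpand (-(j+2))
  set mC : ℂ := ((-(j+2) : ℤ) : ℂ) with hmC
  set cC : ℂ := mC*(mC-1)/2 with hcC
  -- u
  set u : ℂ → ℂ := fun ζ => ζ^(M+1) + α*ζ^(2*M+2) + ζ^(2*M+3) * (ρ⁻¹ * h0 ζ) with hu
  have uan : AnalyticAt ℂ u 0 := by
    rw [hu]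
    exact ((analyticAt_id.pow _).add (analyticAt_const.mul (analyticAt_id.pow _))).add
      ((analyticAt_id.pow _).mul (analyticAt_const.mul h0an))
  have hu0 : u 0 = 0 := by simp [hu]
  have hEcomp : AnalyticAt ℂ (fun ζ => E (u ζ)) 0 := by
    have h2 : AnalyticAt ℂ E (u 0) := by rw [hu0]; exact hEan
    exact h2.comp uan
  have hAe : ∀ᶠ ζ in 𝓝 (0:ℂ), (1 + u ζ)^(-(j+2)) =
      1 + mC * u ζ + cC * (u ζ)^2 + (u ζ)^3 * E (u ζ) := by
    have hT : Tendsto u (𝓝 0) (𝓝 0) := by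
      have := uan.continuousAt.tendsto; rwa [hu0] at this
    exact hT.eventually hEexp
  -- factorization of f
  have hfq : ∀ᶠ ζ in 𝓝 (0:ℂ), f ζ = ζ * (ρ * (1 + u ζ)) := by
    filter_upwards [hEq] with ζ e
    rw [e]
    simp only [hu]
    linear_combination (-(ζ^(2*(M+1)+2) * h0 ζ)) * hri
  -- derivative expansion
  set P : ℂ → ℂ := fun ζ => 1 + ((M:ℂ)+2)*ζ^(M+1) + ((2*(M:ℂ)+3)*α)*ζ^(2*M+2)
      + ζ^(2*M+3) * (ρ⁻¹*((2*(M:ℂ)+4)*h0 ζ + ζ*deriv h0 ζ)) with hP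
  have hD : ∀ᶠ ζ in 𝓝 (0:ℂ), deriv f ζ = ρ * P ζ := by
    set F : ℂ → ℂ := fun ζ => ρ * (ζ + ζ ^ (M+1+1) + α * ζ ^ (2*(M+1)+1))
        + ζ ^ (2*(M+1)+2) * h0 ζ with hF
    have hEF : f =ᶠ[𝓝 (0:ℂ)] F := hEq
    filter_upwards [hEF.deriv, h0an.eventually_analyticAt] with ζ hdf hζ
    have hh0d : HasDerivAt h0 (deriv h0 ζ) ζ := hζ.differentiableAt.hasDerivAt
    have hb : HasDerivAt F
        (ρ * (1 + ((M+1+1:ℕ):ℂ)*ζ^((M+1+1)-1) + α*(((2*(M+1)+1:ℕ):ℂ)*ζ^((2*(M+1)+1)-1)))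
          + (((2*(M+1)+2:ℕ):ℂ)*ζ^((2*(M+1)+2)-1) * h0 ζ + ζ^(2*(M+1)+2) * deriv h0 ζ)) ζ := by
      exact ((((hasDerivAt_id ζ).add (hasDerivAt_pow (M+1+1) ζ)).add
        ((hasDerivAt_pow (2*(M+1)+1) ζ).const_mul α)).const_mul ρ).add
        ((hasDerivAt_pow (2*(M+1)+2) ζ).mul hh0d)
    rw [hdf, hb.deriv]
    have e1 : (M+1+1) - 1 = M+1 := by omega
    have e2 : (2*(M+1)+1) - 1 = 2*M+2 := by omega
    have e3 : (2*(M+1)+2) - 1 = 2*M+3 := by omega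
    rw [e1, e2, e3]
    simp only [hP]
    push_cast
    linear_combination (-(ζ^(2*M+3) * ((2*(M:ℂ)+4)*h0 ζ + ζ * deriv h0 ζ))) * hri
  -- Ok facts
  have hOku : Ok M 0 1 α u :=
    ⟨fun ζ => ρ⁻¹ * h0 ζ, analyticAt_const.mul h0an, by
      filter_upwards with ζ; simp only [hu]; ring⟩
  have hOkP : Ok M 1 ((M:ℂ)+2) ((2*(M:ℂ)+3)*α) P :=
    ⟨fun ζ => ρ⁻¹*((2*(M:ℂ)+4)*h0 ζ + ζ*deriv h0 ζ),
      analyticAt_const.mul ((analyticAt_const.mul h0an).add (analyticAt_id.mul hdh0)), by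
      filter_upwards with ζ; simp only [hP]⟩
  have hu2 : Ok M 0 0 1 (fun ζ => u ζ * u ζ) :=
    (hOku.mul hOku).congr (by ring) (by ring) (by ring) (Eventually.of_forall fun ζ => rfl)
  have hu3 : Ok M 0 0 0 (fun ζ => (u ζ * u ζ) * u ζ) :=
    (hu2.mul hOku).congr (by ring) (by ring) (by ring) (Eventually.of_forall fun ζ => rfl)
  have ht3 : Ok M 0 0 0 (fun ζ => (u ζ)^3 * E (u ζ)) :=
    (hu3.mul_analytic hEcomp).congr rfl rfl rfl (Eventually.of_forall fun ζ => by ring)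
  set A : ℂ → ℂ := fun ζ => 1 + mC * u ζ + cC * (u ζ)^2 + (u ζ)^3 * E (u ζ) with hA
  have hOkA : Ok M 1 mC (mC*α + cC) A := by
    refine ((((Ok.const 1).add (hOku.smul mC)).add (hu2.smul cC)).add ht3).congr
      (by ring) (by ring) (by ring) (Eventually.of_forall fun ζ => ?_)
    simp only [hA]
    ring
  have hOkP2 : Ok M 1 (2*((M:ℂ)+2)) (((M:ℂ)+2)^2 + 2*((2*(M:ℂ)+3)*α))
      (fun ζ => P ζ * P ζ) :=
    (hOkP.mul hOkP).congr (by ring) (by ring) (by ring) (Eventually.of_forall fun ζ => rfl)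
  have hOkG : Ok M 1 (2 * ((M+1:ℕ):ℂ) - (j:ℂ))
      (3 * ((M+1:ℕ):ℂ)^2 - 5/2 * (j:ℂ) * ((M+1:ℕ):ℂ) + 1/2 * (j:ℂ)^2
        + ((j:ℂ) - 4*((M+1:ℕ):ℂ)) * β)
      (fun ζ => A ζ * (P ζ * P ζ)) := by
    refine (hOkA.mul hOkP2).congr (by ring) ?_ ?_ (Eventually.of_forall fun ζ => rfl)
    · rw [hmC]; push_cast; ring
    · rw [hβ, hcC, hmC]; push_cast; ring
  obtain ⟨h, hhan, hhev⟩ := hOkG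
  refine ⟨h, hhan, ?_⟩
  have big : ∀ᶠ ζ in 𝓝 (0:ℂ),
      (f ζ) ^ (-(j + 2)) * (deriv f ζ) ^ 2
        = (starRingEnd ℂ ρ) ^ j *
            (1 + (2 * ((M+1:ℕ):ℂ) - (j : ℂ)) * ζ ^ (M+1)
              + (3 * ((M+1:ℕ):ℂ) ^ 2 - 5 / 2 * (j : ℂ) * ((M+1:ℕ):ℂ) + 1 / 2 * (j : ℂ) ^ 2
                  + ((j : ℂ) - 4 * ((M+1:ℕ):ℂ)) * β) * ζ ^ (2 * (M+1))
              + ζ ^ (2 * (M+1) + 1) * h ζ) * ζ ^ (-(j + 2)) := by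
    filter_upwards [hfq, hD, hAe, hhev] with ζ e1 e2 e3 e4
    have e3' : (1 + u ζ)^(-(j+2)) = A ζ := by rw [hA]; exact e3
    have e4' : A ζ * (P ζ * P ζ) = 1 + (2 * ((M+1:ℕ):ℂ) - (j:ℂ)) * ζ^(M+1)
        + (3 * ((M+1:ℕ):ℂ)^2 - 5/2 * (j:ℂ) * ((M+1:ℕ):ℂ) + 1/2 * (j:ℂ)^2
            + ((j:ℂ) - 4*((M+1:ℕ):ℂ)) * β) * ζ^(2*M+2) + ζ^(2*M+3) * h ζ := e4
    rw [e1, e2, mul_zpow, mul_zpow, e3', ← hρpow]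
    generalize ζ ^ (-(j+2)) = Z
    generalize ρ ^ (-(j+2)) = R
    linear_combination (Z * R * ρ^(2:ℕ)) * e4'
  exact big.filter_mono nhdsWithin_le_nhds
end

section
/- Let f be a rational map of degree D > 1 and q a nonzero meromorphic quadratic differential with f^* q = λ q for some λ ≠ 0 and with no zeros and at worst simple poles (ord_x q ∈ {−1, 0} for all x). Then q has exactly four poles, the set of poles is forward invariant under f, every preimage of a pole is either a pole or a simple critical point, every critical value of f is a pole, and no critical point of f is a pole. -/
open scoped Classical OnePoint
open Polynomial Filter

/-- Evaluation of a rational map in the affine chart. -/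
noncomputable def fe (f : RatFunc ℂ) : ℂ → ℂ := fun z => f.num.eval z / f.denom.eval z

/-- Evaluation of a rational map `f` as a self-map of `P¹ = ℂ ∪ {∞}`. -/
noncomputable def evalSphere (f : RatFunc ℂ) : OnePoint ℂ → OnePoint ℂ :=
  fun x => (show Option ℂ from x).elim
    (if f.denom.natDegree < f.num.natDegree then ∞
      else ((f.num.coeff f.denom.natDegree / f.denom.leadingCoeff : ℂ) : OnePoint ℂ))
    (fun a => if f.denom.eval a = 0 then ∞
      else ((f.num.eval a / f.denom.eval a : ℂ) : OnePoint ℂ))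

/-- Composition of rational functions. -/
noncomputable def ratComp (f g : RatFunc ℂ) : RatFunc ℂ :=
  (Polynomial.aeval g f.num) / (Polynomial.aeval g f.denom)

/-- Local degree of `f` at a finite point `w`. -/
noncomputable def degAt (f : RatFunc ℂ) (w : ℂ) : ℕ :=
  if f.denom.eval w = 0 then f.denom.rootMultiplicity w
  else ((f - RatFunc.C (f.num.eval w / f.denom.eval w)).num).rootMultiplicity w

/-- Local degree of `f` at a point of the sphere. -/
noncomputable def degAtSphere (f : RatFunc ℂ) (x : OnePoint ℂ) : ℕ :=
  (show Option ℂ from x).elim (degAt (ratComp f (1 / RatFunc.X)) 0) (fun a => degAt f a)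

/-- Order of the quadratic differential `g dz²` at a finite point. -/
noncomputable def ordAt (g : RatFunc ℂ) (a : ℂ) : ℤ :=
  (g.num.rootMultiplicity a : ℤ) - (g.denom.rootMultiplicity a : ℤ)

/-- Order of the quadratic differential `g dz²` at `∞` (`dz² = w⁻⁴ dw²`). -/
noncomputable def ordInfQD (g : RatFunc ℂ) : ℤ :=
  (g.denom.natDegree : ℤ) - (g.num.natDegree : ℤ) - 4

/-- Order of the quadratic differential `g dz²` at a point of the sphere. -/
noncomputable def qdOrd (g : RatFunc ℂ) (x : OnePoint ℂ) : ℤ :=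
  (show Option ℂ from x).elim (ordInfQD g) (fun a => ordAt g a)

/-! ### Section 1 : the valuation `ordAt` -/

local notation "am" => algebraMap ℂ[X] (RatFunc ℂ)

lemma am_ne_zero {p : ℂ[X]} (hp : p ≠ 0) : am p ≠ 0 := by
  simpa using (RatFunc.algebraMap_ne_zero hp)

/-- Key representation lemma. -/
lemma ordAt_rep {A B : ℂ[X]} (hA : A ≠ 0) (hB : B ≠ 0) (a : ℂ) :
    ordAt (am A / am B) a = (A.rootMultiplicity a : ℤ) - (B.rootMultiplicity a : ℤ) := by
  set x : RatFunc ℂ := am A / am B with hx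
  have hx0 : x ≠ 0 := div_ne_zero (am_ne_zero hA) (am_ne_zero hB)
  have hcross : x.num * B = A * x.denom := (RatFunc.num_mul_eq_mul_denom_iff hB).mpr hx.symm
  have h1 : rootMultiplicity a (x.num * B) = rootMultiplicity a (A * x.denom) := by rw [hcross]
  rw [rootMultiplicity_mul (mul_ne_zero (RatFunc.num_ne_zero hx0) hB),
    rootMultiplicity_mul (mul_ne_zero hA (RatFunc.denom_ne_zero x))] at h1
  unfold ordAt
  omega

lemma ordAt_am {p : ℂ[X]} (hp : p ≠ 0) (a : ℂ) :
    ordAt (am p) a = (p.rootMultiplicity a : ℤ) := by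
  have := ordAt_rep hp (one_ne_zero (α := ℂ[X])) a
  simpa [rootMultiplicity_eq_zero (by simp : ¬ (1:ℂ[X]).IsRoot a)] using this

lemma ordAt_mul {g h : RatFunc ℂ} (hg : g ≠ 0) (hh : h ≠ 0) (a : ℂ) :
    ordAt (g * h) a = ordAt g a + ordAt h a := by
  have hrep : g * h = am (g.num * h.num) / am (g.denom * h.denom) := by
    conv_lhs => rw [← RatFunc.num_div_denom g, ← RatFunc.num_div_denom h]
    rw [div_mul_div_comm, ← map_mul, ← map_mul]
  rw [hrep, ordAt_rep (mul_ne_zero (RatFunc.num_ne_zero hg) (RatFunc.num_ne_zero hh))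
    (mul_ne_zero (RatFunc.denom_ne_zero g) (RatFunc.denom_ne_zero h)),
    rootMultiplicity_mul (mul_ne_zero (RatFunc.num_ne_zero hg) (RatFunc.num_ne_zero hh)),
    rootMultiplicity_mul (mul_ne_zero (RatFunc.denom_ne_zero g) (RatFunc.denom_ne_zero h))]
  unfold ordAt; push_cast; ring

lemma ordAt_one (a : ℂ) : ordAt 1 a = 0 := by
  have : (1 : RatFunc ℂ) = am 1 / am 1 := by simp
  rw [this, ordAt_rep one_ne_zero one_ne_zero]; ring

lemma ordAt_C (c : ℂ) (a : ℂ) : ordAt (RatFunc.C c) a = 0 := by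
  rcases eq_or_ne c 0 with rfl | hc
  · simp [ordAt, map_zero]
  · rw [← RatFunc.algebraMap_C]
    rw [ordAt_am (by simpa using hc)]
    simp [rootMultiplicity_eq_zero (by simpa [IsRoot] using hc : ¬ (C c).IsRoot a)]

lemma ordAt_inv {g : RatFunc ℂ} (hg : g ≠ 0) (a : ℂ) : ordAt g⁻¹ a = - ordAt g a := by
  have h := ordAt_mul hg (inv_ne_zero hg) a
  rw [mul_inv_cancel₀ hg, ordAt_one] at h
  omega

lemma ordAt_div {g h : RatFunc ℂ} (hg : g ≠ 0) (hh : h ≠ 0) (a : ℂ) :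
    ordAt (g / h) a = ordAt g a - ordAt h a := by
  rw [div_eq_mul_inv, ordAt_mul hg (inv_ne_zero hh), ordAt_inv hh]; ring

lemma ordAt_pow {g : RatFunc ℂ} (hg : g ≠ 0) (n : ℕ) (a : ℂ) :
    ordAt (g ^ n) a = n * ordAt g a := by
  induction n with
  | zero => simpa using ordAt_one a
  | succ n ih => rw [pow_succ, ordAt_mul (pow_ne_zero _ hg) hg, ih]; push_cast; ring

lemma ordAt_neg (g : RatFunc ℂ) (a : ℂ) : ordAt (-g) a = ordAt g a := by
  rcases eq_or_ne g 0 with rfl | hg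
  · simp
  · have : -g = RatFunc.C (-1) * g := by
      rw [show RatFunc.C (-1 : ℂ) = -1 by simp [map_neg, map_one]]; ring
    rw [this, ordAt_mul (by simp : RatFunc.C (-1 : ℂ) ≠ 0) hg, ordAt_C]; ring

lemma min_le_ordAt_add {g h : RatFunc ℂ} (hg : g ≠ 0) (hh : h ≠ 0) (hgh : g + h ≠ 0) (a : ℂ) :
    min (ordAt g a) (ordAt h a) ≤ ordAt (g + h) a := by
  have hrep : g + h = am (g.num * h.denom + h.num * g.denom) / am (g.denom * h.denom) := by
    conv_lhs => rw [← RatFunc.num_div_denom g, ← RatFunc.num_div_denom h]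
    rw [div_add_div _ _ (am_ne_zero (RatFunc.denom_ne_zero g)) (am_ne_zero (RatFunc.denom_ne_zero h)),
      ← map_mul, ← map_mul, ← map_mul, ← map_add]
    ring_nf
  have hnum : g.num * h.denom + h.num * g.denom ≠ 0 := by
    intro h0
    apply hgh
    rw [hrep, h0, map_zero, zero_div]
  rw [hrep, ordAt_rep hnum (mul_ne_zero (RatFunc.denom_ne_zero g) (RatFunc.denom_ne_zero h)) a]
  have hmin := rootMultiplicity_add a hnum (p := g.num * h.denom) (q := h.num * g.denom)
  rw [rootMultiplicity_mul (mul_ne_zero (RatFunc.num_ne_zero hg) (RatFunc.denom_ne_zero h)),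
    rootMultiplicity_mul (mul_ne_zero (RatFunc.num_ne_zero hh) (RatFunc.denom_ne_zero g)),
    min_le_iff] at hmin
  rw [rootMultiplicity_mul (mul_ne_zero (RatFunc.denom_ne_zero g) (RatFunc.denom_ne_zero h))]
  rcases hmin with hmin | hmin
  · refine le_trans (min_le_left _ _) ?_
    unfold ordAt; push_cast; omega
  · refine le_trans (min_le_right _ _) ?_
    unfold ordAt; push_cast; omega

lemma ordAt_add_eq_of_lt {g h : RatFunc ℂ} (hg : g ≠ 0) (hh : h ≠ 0) (a : ℂ)
    (hlt : ordAt h a < ordAt g a) : ordAt (g + h) a = ordAt h a := by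
  have hgh : g + h ≠ 0 := by
    intro h0
    have hne : h = -g := eq_neg_of_add_eq_zero_right h0
    rw [hne, ordAt_neg] at hlt
    exact lt_irrefl _ hlt
  have h1 := min_le_ordAt_add hg hh hgh a
  have h2 : min (ordAt (g+h) a) (ordAt g a) ≤ ordAt h a := by
    have hrw : h = (g + h) + (-g) := by ring
    have := min_le_ordAt_add hgh (neg_ne_zero.mpr hg) (by rw [← hrw]; exact hh) a
    rw [← hrw, ordAt_neg] at this
    exact this
  omega

/-! ### Section 2 : evaluation lemmas -/

lemma fe_def (g : RatFunc ℂ) (a : ℂ) : fe g a = g.num.eval a / g.denom.eval a := rfl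

lemma feRep {A B : ℂ[X]} {g : RatFunc ℂ} (hrep : g = am A / am B) (hB : B ≠ 0) {a : ℂ}
    (hBa : B.eval a ≠ 0) : g.denom.eval a ≠ 0 ∧ fe g a = A.eval a / B.eval a := by
  rcases eq_or_ne g 0 with rfl | hg
  · have hA : am A = 0 := by
      by_contra hA
      exact (div_ne_zero hA (am_ne_zero hB)) hrep.symm
    have hA0 : A = 0 := by
      by_contra h0; exact am_ne_zero h0 hA
    constructor
    · simp [RatFunc.denom_zero]
    · simp [fe_def, RatFunc.num_zero, RatFunc.denom_zero, hA0]
  · have hdvd : g.denom ∣ B := (RatFunc.denom_dvd hB).mpr ⟨A, hrep⟩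
    obtain ⟨k, hk⟩ := hdvd
    have hda : g.denom.eval a ≠ 0 := by
      intro h0
      apply hBa
      rw [hk, eval_mul, h0, zero_mul]
    have hcross : g.num * B = A * g.denom := (RatFunc.num_mul_eq_mul_denom_iff hB).mpr hrep
    have := congrArg (eval a) hcross
    rw [eval_mul, eval_mul] at this
    refine ⟨hda, ?_⟩
    rw [fe_def]
    field_simp
    linear_combination this

lemma add_rep (g h : RatFunc ℂ) :
    g + h = am (g.num * h.denom + h.num * g.denom) / am (g.denom * h.denom) := by
  conv_lhs => rw [← RatFunc.num_div_denom g, ← RatFunc.num_div_denom h]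
  rw [div_add_div _ _ (am_ne_zero (RatFunc.denom_ne_zero g)) (am_ne_zero (RatFunc.denom_ne_zero h)),
    ← map_mul, ← map_mul, ← map_mul, ← map_add]
  ring_nf

lemma mul_rep (g h : RatFunc ℂ) :
    g * h = am (g.num * h.num) / am (g.denom * h.denom) := by
  conv_lhs => rw [← RatFunc.num_div_denom g, ← RatFunc.num_div_denom h]
  rw [div_mul_div_comm, ← map_mul, ← map_mul]

lemma fe_add_at {g h : RatFunc ℂ} {a : ℂ} (hga : g.denom.eval a ≠ 0) (hha : h.denom.eval a ≠ 0) :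
    fe (g + h) a = fe g a + fe h a := by
  have := (feRep (add_rep g h) (mul_ne_zero (RatFunc.denom_ne_zero g) (RatFunc.denom_ne_zero h))
    (a := a) (by simp [eval_mul]; tauto)).2
  rw [this, fe_def, fe_def]
  simp only [eval_add, eval_mul]
  field_simp
  try ring

lemma fe_mul_at {g h : RatFunc ℂ} {a : ℂ} (hga : g.denom.eval a ≠ 0) (hha : h.denom.eval a ≠ 0) :
    fe (g * h) a = fe g a * fe h a := by
  have := (feRep (mul_rep g h) (mul_ne_zero (RatFunc.denom_ne_zero g) (RatFunc.denom_ne_zero h))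
    (a := a) (by simp [eval_mul]; tauto)).2
  rw [this, fe_def, fe_def]
  simp only [eval_add, eval_mul]
  field_simp
  try ring

lemma fe_C (c : ℂ) (a : ℂ) : fe (RatFunc.C c) a = c := by
  have hrep : RatFunc.C c = am (C c) / am 1 := by
    rw [RatFunc.algebraMap_C, map_one, div_one]
  have := (feRep hrep one_ne_zero (a := a) (by simp)).2
  simpa using this

lemma fe_am (p : ℂ[X]) (a : ℂ) : fe (am p) a = p.eval a := by
  have := (feRep (A := p) (B := 1) (g := am p) (by rw [map_one, div_one]) one_ne_zero
    (a := a) (by simp)).2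
  simpa using this

lemma eventually_eval_ne {p : ℂ[X]} (hp : p ≠ 0) : ∀ᶠ z in (cofinite : Filter ℂ), p.eval z ≠ 0 := by
  rw [eventually_cofinite]
  simpa using p.finite_setOf_isRoot hp

lemma eventually_denom_ne (g : RatFunc ℂ) : ∀ᶠ z in (cofinite : Filter ℂ), g.denom.eval z ≠ 0 :=
  eventually_eval_ne (RatFunc.denom_ne_zero g)

lemma eventually_fe_ne {g : RatFunc ℂ} (hg : g ≠ 0) : ∀ᶠ z in (cofinite : Filter ℂ), fe g z ≠ 0 := by
  filter_upwards [eventually_eval_ne (RatFunc.num_ne_zero hg), eventually_denom_ne g] with z h1 h2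
  rw [fe_def]
  exact div_ne_zero h1 h2

lemma neg_rep (g : RatFunc ℂ) : -g = am (-g.num) / am (g.denom) :=
  (RatFunc.num_mul_eq_mul_denom_iff (RatFunc.denom_ne_zero g)).mp (RatFunc.num_denom_neg g)

lemma denom_neg (g : RatFunc ℂ) : (-g).denom = g.denom := by
  have h1 : (-g).denom ∣ g.denom :=
    (RatFunc.denom_dvd (RatFunc.denom_ne_zero g)).mpr ⟨-g.num, neg_rep g⟩
  have h2 : g.denom ∣ (-g).denom := by
    refine (RatFunc.denom_dvd (RatFunc.denom_ne_zero (-g))).mpr ⟨-(-g).num, ?_⟩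
    have := neg_rep (-g)
    rwa [neg_neg] at this
  exact eq_of_monic_of_associated (RatFunc.monic_denom _) (RatFunc.monic_denom _)
    (associated_of_dvd_dvd h1 h2)

lemma fe_neg (g : RatFunc ℂ) (a : ℂ) : fe (-g) a = - fe g a := by
  rcases eq_or_ne (g.denom.eval a) 0 with h0 | h0
  · rw [fe_def, fe_def, denom_neg, h0]
    simp
  · have := (feRep (neg_rep g) (RatFunc.denom_ne_zero g) h0).2
    rw [this, fe_def, eval_neg, neg_div]

lemma fe_eq_iff {g h : RatFunc ℂ} (hfe : ∀ᶠ z in (cofinite : Filter ℂ), fe g z = fe h z) :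
    g = h := by
  by_contra hne
  have hk : g - h ≠ 0 := sub_ne_zero.mpr hne
  have hev : ∀ᶠ z in (cofinite : Filter ℂ), fe (g - h) z = 0 := by
    filter_upwards [hfe, eventually_denom_ne g, eventually_denom_ne (-h)] with z h1 h2 h3
    rw [sub_eq_add_neg, fe_add_at h2 h3, fe_neg, h1]
    ring
  have := eventually_fe_ne hk
  have hcontra : ∀ᶠ z in (cofinite : Filter ℂ), False := by
    filter_upwards [hev, this] with z h1 h2; exact h2 h1
  rw [eventually_cofinite] at hcontra
  simp only [not_false_iff, Set.setOf_true] at hcontra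
  exact Set.infinite_univ hcontra

/-! ### Section 3 : the derivative of a rational function -/

noncomputable def rd (h : RatFunc ℂ) : RatFunc ℂ :=
  am (h.num.derivative * h.denom - h.num * h.denom.derivative) / am (h.denom ^ 2)

lemma deriv_ratio (A B : ℂ[X]) {z : ℂ} (hz : B.eval z ≠ 0) :
    deriv (fun w => A.eval w / B.eval w) z =
      (A.derivative.eval z * B.eval z - A.eval z * B.derivative.eval z) / (B.eval z) ^ 2 := by
  rw [deriv_fun_div (A.differentiableAt) (B.differentiableAt) hz, Polynomial.deriv, Polynomial.deriv]

lemma fe_rd (h : RatFunc ℂ) {z : ℂ} (hz : h.denom.eval z ≠ 0) :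
    fe (rd h) z = deriv (fe h) z := by
  have h2 : (h.denom ^ 2).eval z ≠ 0 := by
    rw [eval_pow]; exact pow_ne_zero _ hz
  have := (feRep (g := rd h) rfl (pow_ne_zero _ (RatFunc.denom_ne_zero h)) h2).2
  rw [this]
  have : deriv (fe h) z = deriv (fun w => h.num.eval w / h.denom.eval w) z := rfl
  rw [this, deriv_ratio _ _ hz]
  simp [eval_pow]

lemma deriv_congr_cofinite {F G : ℂ → ℂ} (hev : ∀ᶠ z in (cofinite : Filter ℂ), F z = G z) :
    ∀ᶠ z in (cofinite : Filter ℂ), deriv F z = deriv G z := by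
  rw [eventually_cofinite] at hev ⊢
  refine hev.subset ?_
  intro z hz
  by_contra hmem
  exact hz (Filter.EventuallyEq.deriv_eq (Filter.eventually_of_mem
    (hev.isClosed.isOpen_compl.mem_nhds hmem) (fun w hw => not_not.mp hw)))

lemma rd_rep {A B : ℂ[X]} (hB : B ≠ 0) {h : RatFunc ℂ} (hrep : h = am A / am B) :
    rd h = am (A.derivative * B - A * B.derivative) / am (B ^ 2) := by
  apply fe_eq_iff
  have hd1 : ∀ᶠ z in (cofinite : Filter ℂ), deriv (fe h) z = deriv (fun w => A.eval w / B.eval w) z := by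
    apply deriv_congr_cofinite
    filter_upwards [eventually_eval_ne hB] with z hz
    exact (feRep hrep hB hz).2
  filter_upwards [eventually_denom_ne h, eventually_eval_ne hB, hd1] with z h1 h2 h3
  rw [fe_rd h h1, h3, deriv_ratio _ _ h2]
  have h4 : (B ^ 2).eval z ≠ 0 := by rw [eval_pow]; exact pow_ne_zero _ h2
  rw [(feRep (g := am (A.derivative * B - A * B.derivative) / am (B ^ 2)) rfl
    (pow_ne_zero _ hB) h4).2]
  simp [eval_pow]

/-! ### Section 4 : nonconstant maps and `aeval` -/

/-- `h` is nonconstant. -/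
def Noncst (h : RatFunc ℂ) : Prop := ∀ c : ℂ, h ≠ RatFunc.C c

lemma Noncst.ne_zero {h : RatFunc ℂ} (hh : Noncst h) : h ≠ 0 := by
  intro h0; exact hh 0 (by rw [h0, map_zero])

lemma aeval_C' (h : RatFunc ℂ) (c : ℂ) : aeval h (C c) = RatFunc.C c := by
  rw [aeval_C, ← RatFunc.algebraMap_eq_C]

lemma aeval_ne_zero_aux (h : RatFunc ℂ) (hh : Noncst h) :
    ∀ n : ℕ, ∀ p : ℂ[X], p.natDegree ≤ n → p ≠ 0 → aeval h p ≠ 0 := by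
  intro n
  induction n with
  | zero =>
    intro p hdeg hp
    rw [eq_C_of_natDegree_le_zero hdeg, aeval_C']
    intro h0
    rw [map_eq_zero_iff _ (RingHom.injective _)] at h0
    exact hp (by rw [eq_C_of_natDegree_le_zero hdeg, h0, map_zero])
  | succ n ih =>
    intro p hdeg hp
    rcases Nat.eq_zero_or_pos p.natDegree with h0 | hpos
    · rw [eq_C_of_natDegree_le_zero h0.le, aeval_C']
      intro hC
      rw [map_eq_zero_iff _ (RingHom.injective _)] at hC
      exact hp (by rw [eq_C_of_natDegree_le_zero h0.le, hC, map_zero])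
    · obtain ⟨z, hz⟩ := Complex.exists_root (natDegree_pos_iff_degree_pos.mp hpos)
      obtain ⟨p1, hp1⟩ := dvd_iff_isRoot.mpr hz
      have hp1ne : p1 ≠ 0 := by rintro rfl; exact hp (by rw [hp1, mul_zero])
      have hXz : (X - C z : ℂ[X]) ≠ 0 := X_sub_C_ne_zero z
      have hdeg1 : p1.natDegree ≤ n := by
        have := natDegree_mul hXz hp1ne
        rw [← hp1, natDegree_X_sub_C] at this
        omega
      rw [hp1, map_mul]
      refine mul_ne_zero ?_ (ih p1 hdeg1 hp1ne)
      rw [map_sub, aeval_X, aeval_C, RatFunc.algebraMap_eq_C, sub_ne_zero]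
      exact hh z

lemma aeval_ne_zero {h : RatFunc ℂ} (hh : Noncst h) {p : ℂ[X]} (hp : p ≠ 0) :
    aeval h p ≠ 0 := aeval_ne_zero_aux h hh p.natDegree p le_rfl hp

lemma ratComp_ne_zero {q h : RatFunc ℂ} (hq : q ≠ 0) (hh : Noncst h) : ratComp q h ≠ 0 :=
  div_ne_zero (aeval_ne_zero hh (RatFunc.num_ne_zero hq)) (aeval_ne_zero hh (RatFunc.denom_ne_zero q))

/-- ordAt of `h - C c` is nonnegative where the denominator doesn't vanish;
more precisely `h - C c` has the same denominator divisibility. -/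
lemma sub_C_rep (h : RatFunc ℂ) (c : ℂ) :
    h - RatFunc.C c = am (h.num - C c * h.denom) / am h.denom := by
  rw [map_sub, map_mul, sub_div, RatFunc.num_div_denom, RatFunc.algebraMap_C]
  congr 1
  rw [mul_div_assoc, div_self (am_ne_zero (RatFunc.denom_ne_zero h)), mul_one]

lemma ordAt_sub_C_nonneg {h : RatFunc ℂ} (hh : Noncst h) (c : ℂ) {w : ℂ}
    (hw : h.denom.eval w ≠ 0) : 0 ≤ ordAt (h - RatFunc.C c) w := by
  have hnum : h.num - C c * h.denom ≠ 0 := by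
    intro h0
    apply hh c
    have : h - RatFunc.C c = 0 := by rw [sub_C_rep, h0, map_zero, zero_div]
    linear_combination this
  rw [sub_C_rep, ordAt_rep hnum (RatFunc.denom_ne_zero h)]
  rw [rootMultiplicity_eq_zero (p := h.denom) (by simpa [IsRoot] using hw)]
  push_cast
  omega

/-- `aeval h p` has nonnegative order at `w` if `h` has no pole at `w`. -/
lemma ordAt_aeval_nonneg {h : RatFunc ℂ} (hh : Noncst h) {w : ℂ} (hw : h.denom.eval w ≠ 0) :
    ∀ n : ℕ, ∀ p : ℂ[X], p.natDegree ≤ n → p ≠ 0 → 0 ≤ ordAt (aeval h p) w := by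
  intro n
  induction n with
  | zero =>
    intro p hdeg _
    rw [eq_C_of_natDegree_le_zero hdeg, aeval_C', ordAt_C]
  | succ n ih =>
    intro p hdeg hp
    rcases Nat.eq_zero_or_pos p.natDegree with h0 | hpos
    · rw [eq_C_of_natDegree_le_zero h0.le, aeval_C', ordAt_C]
    · obtain ⟨z, hz⟩ := Complex.exists_root (natDegree_pos_iff_degree_pos.mp hpos)
      obtain ⟨p1, hp1⟩ := dvd_iff_isRoot.mpr hz
      have hp1ne : p1 ≠ 0 := by rintro rfl; exact hp (by rw [hp1, mul_zero])
      have hdeg1 : p1.natDegree ≤ n := by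
        have := natDegree_mul (X_sub_C_ne_zero z) hp1ne
        rw [← hp1, natDegree_X_sub_C] at this
        omega
      rw [hp1, map_mul, map_sub, aeval_X, aeval_C, RatFunc.algebraMap_eq_C]
      rw [ordAt_mul (by rw [sub_ne_zero]; exact hh z) (aeval_ne_zero hh hp1ne)]
      have h1 := ordAt_sub_C_nonneg hh z hw
      have h2 := ih p1 hdeg1 hp1ne
      linarith [h1, h2]

/-! ### Section 5 : local order computations -/

lemma rm_wronskian {A B : ℂ[X]} (hA : A ≠ 0) {w : ℂ} (hB0 : B.eval w ≠ 0)
    (hd : 1 ≤ A.rootMultiplicity w) :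
    A.derivative * B - A * B.derivative ≠ 0 ∧
      (A.derivative * B - A * B.derivative).rootMultiplicity w = A.rootMultiplicity w - 1 := by
  obtain ⟨U, hU⟩ := pow_rootMultiplicity_dvd A w
  have hUne : U ≠ 0 := by rintro rfl; exact hA (by rw [hU, mul_zero])
  have hUw : U.eval w ≠ 0 := by
    intro h0
    obtain ⟨V, hV⟩ := dvd_iff_isRoot.mpr h0
    apply pow_rootMultiplicity_not_dvd hA w
    refine ⟨V, ?_⟩
    conv_lhs => rw [hU]
    rw [hV]
    ring
  obtain ⟨e, he⟩ : ∃ e, A.rootMultiplicity w = e + 1 := ⟨A.rootMultiplicity w - 1, by omega⟩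
  set E : ℂ[X] := (C ((e:ℂ) + 1) * U + (X - C w) * U.derivative) * B - (X - C w) * U * B.derivative
    with hE
  have hkey : A.derivative * B - A * B.derivative = (X - C w) ^ e * E := by
    conv_lhs => rw [hU]
    rw [he, hE, derivative_mul, derivative_pow, derivative_X_sub_C]
    push_cast
    ring
  have hEw : E.eval w ≠ 0 := by
    have heval : E.eval w = ((e:ℂ) + 1) * U.eval w * B.eval w := by
      rw [hE]
      simp only [eval_sub, eval_mul, eval_add, eval_X, eval_C, sub_self, zero_mul, mul_zero]
      ring
    rw [heval]
    refine mul_ne_zero (mul_ne_zero ?_ hUw) hB0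
    exact_mod_cast Nat.cast_add_one_ne_zero (R := ℂ) e
  have hEne : E ≠ 0 := fun h0 => hEw (by rw [h0]; simp)
  have hne : A.derivative * B - A * B.derivative ≠ 0 := by
    rw [hkey]
    exact mul_ne_zero (pow_ne_zero _ (X_sub_C_ne_zero w)) hEne
  refine ⟨hne, ?_⟩
  rw [hkey, rootMultiplicity_mul (hkey ▸ hne), rootMultiplicity_X_sub_C_pow,
    rootMultiplicity_eq_zero (by simpa [IsRoot] using hEw)]
  omega

lemma ordAt_sub_C_value {h : RatFunc ℂ} (hh : Noncst h) {w : ℂ} (hw : h.denom.eval w ≠ 0) :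
    ordAt (h - RatFunc.C (fe h w)) w = degAt h w ∧ 1 ≤ degAt h w := by
  set c := fe h w with hc
  have hnum : h.num - C c * h.denom ≠ 0 := by
    intro h0
    apply hh c
    have : h - RatFunc.C c = 0 := by rw [sub_C_rep, h0, map_zero, zero_div]
    linear_combination this
  have hsub : h - RatFunc.C c ≠ 0 := sub_ne_zero.mpr (hh c)
  -- the reduced numerator has the same multiplicity as h.num - C c * h.denom
  have hdvd : (h - RatFunc.C c).denom ∣ h.denom :=
    (RatFunc.denom_dvd (RatFunc.denom_ne_zero h)).mpr ⟨h.num - C c * h.denom, sub_C_rep h c⟩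
  have hdw : (h - RatFunc.C c).denom.eval w ≠ 0 := by
    obtain ⟨k, hk⟩ := hdvd
    intro h0
    apply hw
    rw [hk, eval_mul, h0, zero_mul]
  have hcross : (h - RatFunc.C c).num * h.denom = (h.num - C c * h.denom) * (h - RatFunc.C c).denom :=
    (RatFunc.num_mul_eq_mul_denom_iff (RatFunc.denom_ne_zero h)).mpr (sub_C_rep h c)
  have hrm : (h - RatFunc.C c).num.rootMultiplicity w = (h.num - C c * h.denom).rootMultiplicity w := by
    have h1 := congrArg (rootMultiplicity w) hcross
    rw [rootMultiplicity_mul (mul_ne_zero (RatFunc.num_ne_zero hsub) (RatFunc.denom_ne_zero h)),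
      rootMultiplicity_mul (mul_ne_zero hnum (RatFunc.denom_ne_zero _)),
      rootMultiplicity_eq_zero (p := h.denom) (by simpa [IsRoot] using hw),
      rootMultiplicity_eq_zero (p := (h - RatFunc.C c).denom) (by simpa [IsRoot] using hdw)] at h1
    omega
  have hdegAt : degAt h w = (h - RatFunc.C c).num.rootMultiplicity w := by
    rw [degAt, if_neg hw, hc, fe_def]
  have hroot : (h.num - C c * h.denom).eval w = 0 := by
    rw [eval_sub, eval_mul, eval_C, hc, fe_def]
    field_simp
    ring
  constructor
  · rw [sub_C_rep, ordAt_rep hnum (RatFunc.denom_ne_zero h),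
      rootMultiplicity_eq_zero (p := h.denom) (by simpa [IsRoot] using hw), hdegAt, hrm]
    omega
  · rw [hdegAt, hrm]
    exact (rootMultiplicity_pos hnum).mpr hroot

/-- order of `aeval h p` at a point where `h` takes a finite value not a root of `p`. -/
lemma ordAt_aeval_eq_zero {h : RatFunc ℂ} (hh : Noncst h) {w : ℂ} (hw : h.denom.eval w ≠ 0)
    {p : ℂ[X]} (hp : p.eval (fe h w) ≠ 0) : ordAt (aeval h p) w = 0 := by
  set c := fe h w with hc
  obtain ⟨p1, hp1⟩ := X_sub_C_dvd_sub_C_eval (a := c) (p := p)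
  have hpdec : p = (X - C c) * p1 + C (p.eval c) := by linear_combination hp1
  have haeval : aeval h p = (h - RatFunc.C c) * aeval h p1 + RatFunc.C (p.eval c) := by
    conv_lhs => rw [hpdec]
    rw [map_add, map_mul, map_sub, aeval_X, aeval_C, aeval_C, RatFunc.algebraMap_eq_C]
  rcases eq_or_ne p1 0 with rfl | hp1ne
  · rw [haeval, map_zero, mul_zero, zero_add, ordAt_C]
  · have hprod : (h - RatFunc.C c) * aeval h p1 ≠ 0 :=
      mul_ne_zero (sub_ne_zero.mpr (hh c)) (aeval_ne_zero hh hp1ne)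
    have hCne : RatFunc.C (p.eval c) ≠ 0 := by
      rw [Ne, map_eq_zero_iff _ (RingHom.injective _)]
      exact hp
    have hord : ordAt (RatFunc.C (p.eval c)) w < ordAt ((h - RatFunc.C c) * aeval h p1) w := by
      rw [ordAt_C, ordAt_mul (sub_ne_zero.mpr (hh c)) (aeval_ne_zero hh hp1ne)]
      have h1 : ordAt (h - RatFunc.C c) w = (degAt h w : ℤ) := by
        rw [hc]; exact (ordAt_sub_C_value hh hw).1
      have h2 := (ordAt_sub_C_value hh hw).2
      have h3 := ordAt_aeval_nonneg hh hw p1.natDegree p1 le_rfl hp1ne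
      omega
    rw [haeval, ordAt_add_eq_of_lt hprod hCne w hord, ordAt_C]

/-- order of `aeval h p` at a pole of `h`. -/
lemma ordAt_aeval_pole {h : RatFunc ℂ} (hh : Noncst h) {w : ℂ} {d : ℕ} (hd : 1 ≤ d)
    (hvh : ordAt h w = -(d:ℤ)) :
    ∀ n : ℕ, ∀ p : ℂ[X], p.natDegree ≤ n → p ≠ 0 →
      ordAt (aeval h p) w = -(d:ℤ) * p.natDegree := by
  intro n
  induction n with
  | zero =>
    intro p hdeg _
    rw [eq_C_of_natDegree_le_zero hdeg, aeval_C', ordAt_C, natDegree_C]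
    ring
  | succ n ih =>
    intro p hdeg hp
    rcases Nat.eq_zero_or_pos p.natDegree with h0 | hpos
    · rw [eq_C_of_natDegree_le_zero h0.le, aeval_C', ordAt_C, natDegree_C]
      simp
    · have hlc : p.leadingCoeff ≠ 0 := leadingCoeff_ne_zero.mpr hp
      have hterm : aeval h (C p.leadingCoeff * X ^ p.natDegree)
          = RatFunc.C p.leadingCoeff * h ^ p.natDegree := by
        rw [map_mul, map_pow, aeval_X, aeval_C, RatFunc.algebraMap_eq_C]
      have hCne : RatFunc.C p.leadingCoeff ≠ 0 := by
        rw [Ne, map_eq_zero_iff _ (RingHom.injective _)]; exact hlc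
      have hordterm : ordAt (RatFunc.C p.leadingCoeff * h ^ p.natDegree) w
          = -(d:ℤ) * p.natDegree := by
        rw [ordAt_mul hCne (pow_ne_zero _ hh.ne_zero), ordAt_C, ordAt_pow hh.ne_zero, hvh]
        ring
      rcases eq_or_ne p.eraseLead 0 with hel | hel
      · conv_lhs => rw [← p.eraseLead_add_C_mul_X_pow, hel, zero_add]
        rw [hterm, hordterm]
      · have hdegel : p.eraseLead.natDegree ≤ n := by
          have h1 := p.eraseLead_natDegree_le
          omega
        have hih := ih p.eraseLead hdegel hel
        have haeel : aeval h p.eraseLead ≠ 0 := aeval_ne_zero hh hel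
        have htermne : RatFunc.C p.leadingCoeff * h ^ p.natDegree ≠ 0 :=
          mul_ne_zero hCne (pow_ne_zero _ hh.ne_zero)
        have hlt : ordAt (RatFunc.C p.leadingCoeff * h ^ p.natDegree) w
            < ordAt (aeval h p.eraseLead) w := by
          rw [hordterm, hih]
          have h1 := p.eraseLead_natDegree_le
          have h2 : p.eraseLead.natDegree ≤ p.natDegree - 1 := h1
          have h3 : (p.eraseLead.natDegree : ℤ) ≤ (p.natDegree : ℤ) - 1 := by
            push_cast
            omega
          nlinarith [hd, hpos]
        conv_lhs => rw [← p.eraseLead_add_C_mul_X_pow, map_add, hterm]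
        rw [ordAt_add_eq_of_lt haeel htermne w hlt, hordterm]

lemma rm_factor {p : ℂ[X]} (hp : p ≠ 0) (a : ℂ) :
    ∃ N, p = (X - C a) ^ (p.rootMultiplicity a) * N ∧ N.eval a ≠ 0 := by
  obtain ⟨N, hN⟩ := pow_rootMultiplicity_dvd p a
  refine ⟨N, hN, ?_⟩
  intro h0
  obtain ⟨V, hV⟩ := dvd_iff_isRoot.mpr h0
  apply pow_rootMultiplicity_not_dvd hp a
  refine ⟨V, ?_⟩
  conv_lhs => rw [hN]
  rw [hV]
  ring

lemma rm_neg (p : ℂ[X]) (a : ℂ) : (-p).rootMultiplicity a = p.rootMultiplicity a := by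
  rcases eq_or_ne p 0 with rfl | hp
  · simp
  · have hC : (C (-1 : ℂ)) = (-1 : ℂ[X]) := by simp
    have h1 : (-p) = C (-1) * p := by rw [hC]; ring
    rw [h1, rootMultiplicity_mul (by rw [hC]; simpa using hp),
      rootMultiplicity_eq_zero (p := C (-1 : ℂ)) (by simp [IsRoot])]
    omega

/-- The master local pullback formula. -/
lemma master {q h : RatFunc ℂ} (hq : q ≠ 0) (hh : Noncst h) (w : ℂ) :
    1 ≤ degAt h w ∧
    ordAt (ratComp q h * rd h ^ 2) w =
      (degAt h w : ℤ) * ((if h.denom.eval w = 0 then ordInfQD q else ordAt q (fe h w)) + 2) - 2 := by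
  have hAB := RatFunc.num_div_denom h
  by_cases hpole : h.denom.eval w = 0
  · -- pole case
    set d := h.denom.rootMultiplicity w with hdd
    have hdeg : degAt h w = d := by rw [degAt, if_pos hpole]
    have hd1 : 1 ≤ d := (rootMultiplicity_pos (RatFunc.denom_ne_zero h)).mpr hpole
    have hnumw : h.num.eval w ≠ 0 := by
      obtain ⟨u, v, huv⟩ := RatFunc.isCoprime_num_denom h
      intro h0
      have := congrArg (eval w) huv
      simp [eval_add, eval_mul, h0, hpole] at this
    have hvh : ordAt h w = -(d:ℤ) := by
      rw [ordAt, rootMultiplicity_eq_zero (p := h.num) (by simpa [IsRoot] using hnumw)]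
      simp [hdd]
    have hnum0 : h.num ≠ 0 := RatFunc.num_ne_zero hh.ne_zero
    -- ratComp order
    have hcompord : ordAt (ratComp q h) w =
        (d:ℤ) * ((q.denom.natDegree : ℤ) - (q.num.natDegree : ℤ)) := by
      rw [ratComp, ordAt_div (aeval_ne_zero hh (RatFunc.num_ne_zero hq))
        (aeval_ne_zero hh (RatFunc.denom_ne_zero q)),
        ordAt_aeval_pole hh hd1 hvh q.num.natDegree q.num le_rfl (RatFunc.num_ne_zero hq),
        ordAt_aeval_pole hh hd1 hvh q.denom.natDegree q.denom le_rfl (RatFunc.denom_ne_zero q)]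
      ring
    -- rd order
    obtain ⟨hWne, hWrm⟩ := rm_wronskian (A := h.denom) (B := h.num)
      (RatFunc.denom_ne_zero h) hnumw (by rw [← hdd]; exact hd1)
    have hsw : h.num.derivative * h.denom - h.num * h.denom.derivative
        = -(h.denom.derivative * h.num - h.denom * h.num.derivative) := by ring
    have hrdnum : h.num.derivative * h.denom - h.num * h.denom.derivative ≠ 0 := by
      rw [hsw]; exact neg_ne_zero.mpr hWne
    have hrdord : ordAt (rd h) w = -((d:ℤ) + 1) := by
      rw [rd, ordAt_rep hrdnum (pow_ne_zero _ (RatFunc.denom_ne_zero h)), hsw, rm_neg, hWrm]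
      have h2 : (h.denom ^ 2).rootMultiplicity w = 2 * d := by
        rw [pow_two, rootMultiplicity_mul (mul_ne_zero (RatFunc.denom_ne_zero h)
          (RatFunc.denom_ne_zero h)), ← hdd]
        ring
      rw [h2]
      push_cast
      omega
    have hrdne : rd h ≠ 0 :=
      div_ne_zero (am_ne_zero hrdnum) (am_ne_zero (pow_ne_zero _ (RatFunc.denom_ne_zero h)))
    refine ⟨by rw [hdeg]; exact hd1, ?_⟩
    rw [if_pos hpole, ordAt_mul (ratComp_ne_zero hq hh) (pow_ne_zero _ hrdne),
      ordAt_pow hrdne, hcompord, hrdord, hdeg, ordInfQD]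
    push_cast
    ring
  · -- finite value case
    set c := fe h w with hc
    obtain ⟨hordsub, hd1'⟩ := ordAt_sub_C_value hh hpole
    rw [← hc] at hordsub
    set d := degAt h w with hdd
    have hnum1 : h.num - C c * h.denom ≠ 0 := by
      intro h0
      apply hh c
      have : h - RatFunc.C c = 0 := by rw [sub_C_rep, h0, map_zero, zero_div]
      linear_combination this
    have hrmA1 : (h.num - C c * h.denom).rootMultiplicity w = d := by
      have := hordsub
      rw [sub_C_rep, ordAt_rep hnum1 (RatFunc.denom_ne_zero h),
        rootMultiplicity_eq_zero (p := h.denom) (by simpa [IsRoot] using hpole)] at this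
      omega
    -- rd order
    obtain ⟨hWne, hWrm⟩ := rm_wronskian (A := h.num - C c * h.denom) (B := h.denom)
      hnum1 hpole (by rw [hrmA1]; exact hd1')
    have hsw : (h.num - C c * h.denom).derivative * h.denom
          - (h.num - C c * h.denom) * h.denom.derivative
        = h.num.derivative * h.denom - h.num * h.denom.derivative := by
      rw [derivative_sub, derivative_mul, derivative_C]
      ring
    rw [hsw] at hWne hWrm
    have hrdord : ordAt (rd h) w = (d:ℤ) - 1 := by
      rw [rd, ordAt_rep hWne (pow_ne_zero _ (RatFunc.denom_ne_zero h)), hWrm, hrmA1]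
      have h2 : (h.denom ^ 2).rootMultiplicity w = 0 := by
        rw [rootMultiplicity_eq_zero]
        simp only [IsRoot, eval_pow]
        exact pow_ne_zero _ hpole
      rw [h2]
      push_cast
      omega
    have hrdne : rd h ≠ 0 :=
      div_ne_zero (am_ne_zero hWne) (am_ne_zero (pow_ne_zero _ (RatFunc.denom_ne_zero h)))
    -- ratComp order
    set m := q.num.rootMultiplicity c with hm
    set k := q.denom.rootMultiplicity c with hk
    have hcompnum : ordAt (aeval h q.num) w = (m:ℤ) * d := by
      obtain ⟨N, hN, hNc⟩ := rm_factor (RatFunc.num_ne_zero hq) c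
      have hNne : N ≠ 0 := fun h0 => hNc (by rw [h0]; simp)
      rw [hN, map_mul, map_pow, map_sub, aeval_X, aeval_C, RatFunc.algebraMap_eq_C]
      rw [ordAt_mul (pow_ne_zero _ (sub_ne_zero.mpr (hh c))) (aeval_ne_zero hh hNne),
        ordAt_pow (sub_ne_zero.mpr (hh c)), ordAt_aeval_eq_zero hh hpole hNc, hordsub]
      push_cast
      ring
    have hcompden : ordAt (aeval h q.denom) w = (k:ℤ) * d := by
      obtain ⟨N, hN, hNc⟩ := rm_factor (RatFunc.denom_ne_zero q) c
      have hNne : N ≠ 0 := fun h0 => hNc (by rw [h0]; simp)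
      rw [hN, map_mul, map_pow, map_sub, aeval_X, aeval_C, RatFunc.algebraMap_eq_C]
      rw [ordAt_mul (pow_ne_zero _ (sub_ne_zero.mpr (hh c))) (aeval_ne_zero hh hNne),
        ordAt_pow (sub_ne_zero.mpr (hh c)), ordAt_aeval_eq_zero hh hpole hNc, hordsub]
      push_cast
      ring
    have hordq : ordAt q c = (m:ℤ) - (k:ℤ) := rfl
    refine ⟨hd1', ?_⟩
    rw [if_neg hpole, ordAt_mul (ratComp_ne_zero hq hh) (pow_ne_zero _ hrdne),
      ordAt_pow hrdne, ratComp,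
      ordAt_div (aeval_ne_zero hh (RatFunc.num_ne_zero hq))
        (aeval_ne_zero hh (RatFunc.denom_ne_zero q)),
      hcompnum, hcompden, hrdord, hordq]
    push_cast
    ring

/-! ### Section 6 : from `heig` to the algebraic identity -/

lemma ev_fe_mul (g k : RatFunc ℂ) : ∀ᶠ z in (cofinite : Filter ℂ), fe (g * k) z = fe g z * fe k z := by
  filter_upwards [eventually_denom_ne g, eventually_denom_ne k] with z h1 h2
  exact fe_mul_at h1 h2

lemma ev_fe_add (g k : RatFunc ℂ) : ∀ᶠ z in (cofinite : Filter ℂ), fe (g + k) z = fe g z + fe k z := by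
  filter_upwards [eventually_denom_ne g, eventually_denom_ne k] with z h1 h2
  exact fe_add_at h1 h2

lemma ev_fe_pow (g : RatFunc ℂ) (n : ℕ) :
    ∀ᶠ z in (cofinite : Filter ℂ), fe (g ^ n) z = (fe g z) ^ n := by
  induction n with
  | zero =>
    refine Eventually.of_forall fun z => ?_
    have h1 : (g ^ 0 : RatFunc ℂ) = am 1 := by rw [pow_zero, map_one]
    rw [h1, fe_am, pow_zero, eval_one]
  | succ n ih =>
    filter_upwards [ih, ev_fe_mul (g ^ n) g] with z h1 h2
    rw [pow_succ, h2, h1, pow_succ]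

lemma ev_fe_aeval (h : RatFunc ℂ) (p : ℂ[X]) :
    ∀ᶠ z in (cofinite : Filter ℂ), fe (aeval h p) z = p.eval (fe h z) := by
  induction p using Polynomial.induction_on' with
  | add p q hp hq =>
    filter_upwards [hp, hq, ev_fe_add (aeval h p) (aeval h q)] with z h1 h2 h3
    rw [map_add, h3, h1, h2, eval_add]
  | monomial n a =>
    filter_upwards [ev_fe_mul (RatFunc.C a) (h ^ n), ev_fe_pow h n] with z h1 h2
    rw [aeval_monomial, RatFunc.algebraMap_eq_C, h1, h2, fe_C, eval_monomial]

lemma ev_fe_ratComp {h : RatFunc ℂ} (hh : Noncst h) (q : RatFunc ℂ) :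
    ∀ᶠ z in (cofinite : Filter ℂ), fe (ratComp q h) z = fe q (fe h z) := by
  have hDn : aeval h q.denom ≠ 0 := aeval_ne_zero hh (RatFunc.denom_ne_zero q)
  have hmul : ratComp q h * aeval h q.denom = aeval h q.num := div_mul_cancel₀ _ hDn
  filter_upwards [ev_fe_mul (ratComp q h) (aeval h q.denom), ev_fe_aeval h q.num,
    ev_fe_aeval h q.denom, eventually_fe_ne hDn] with z h1 h2 h3 h4
  have h5 : fe (ratComp q h) z * fe (aeval h q.denom) z = fe (aeval h q.num) z := by
    rw [← h1, hmul]
  rw [fe_def q]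
  rw [h3] at h4 h5
  rw [h2] at h5
  field_simp
  linear_combination h5

lemma noncst_of_deg {f : RatFunc ℂ} (hD1 : 1 ≤ max f.num.natDegree f.denom.natDegree) :
    Noncst f := by
  intro c hc
  have h1 : f.num = C c := by
    rw [hc, ← RatFunc.algebraMap_C, RatFunc.num_algebraMap]
  have h2 : f.denom = 1 := by
    rw [hc, ← RatFunc.algebraMap_C, RatFunc.denom_algebraMap]
  rw [h1, h2, natDegree_C, natDegree_one] at hD1
  omega

lemma star_identity {f q : RatFunc ℂ} (lam : ℂ) (hf : Noncst f)
    (heig : ∀ᶠ z in (Filter.cofinite : Filter ℂ),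
      fe q (fe f z) * (deriv (fe f) z) ^ 2 = lam * fe q z) :
    ratComp q f * rd f ^ 2 = RatFunc.C lam * q := by
  apply fe_eq_iff
  filter_upwards [heig, ev_fe_ratComp hf q, ev_fe_mul (ratComp q f) (rd f ^ 2),
    ev_fe_pow (rd f) 2, eventually_denom_ne f, ev_fe_mul (RatFunc.C lam) q]
    with z h1 h2 h3 h4 h5 h6
  rw [h3, h2, h4, fe_rd f h5, h6, fe_C, h1]

/-! ### Section 6b : the chart at infinity -/

lemma ev_inv {P : ℂ → Prop} (h : ∀ᶠ z in (cofinite : Filter ℂ), P z) :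
    ∀ᶠ z in (cofinite : Filter ℂ), P z⁻¹ :=
  (inv_injective.tendsto_cofinite).eventually h

lemma s_rep : (1 / RatFunc.X : RatFunc ℂ) = am 1 / am X := by
  rw [map_one, RatFunc.algebraMap_X]

lemma s_noncst : Noncst (1 / RatFunc.X : RatFunc ℂ) := by
  intro c hc
  rw [s_rep, div_eq_iff (am_ne_zero X_ne_zero), ← RatFunc.algebraMap_C, ← map_mul] at hc
  have := RatFunc.algebraMap_injective ℂ hc
  have h0 := congrArg (fun p : ℂ[X] => p.coeff 0) this
  simp [coeff_X_zero] at h0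

lemma fe_s {z : ℂ} (hz : z ≠ 0) : fe (1 / RatFunc.X : RatFunc ℂ) z = z⁻¹ := by
  have := (feRep s_rep X_ne_zero (a := z) (by simpa using hz)).2
  rw [this]
  simp [one_div]

lemma rd_s : rd (1 / RatFunc.X : RatFunc ℂ) = am (-1) / am (X ^ 2) := by
  rw [rd_rep X_ne_zero s_rep]
  congr 1
  simp

lemma fe_rd_s {z : ℂ} (hz : z ≠ 0) : fe (rd (1 / RatFunc.X : RatFunc ℂ)) z = -(z ^ 2)⁻¹ := by
  have := (feRep (g := rd (1 / RatFunc.X)) rd_s (pow_ne_zero _ X_ne_zero) (a := z)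
    (by simpa [eval_pow] using pow_ne_zero 2 hz)).2
  rw [this]
  simp [eval_pow]
  field_simp

lemma rm_X_zero : (X : ℂ[X]).rootMultiplicity 0 = 1 := by
  have := rootMultiplicity_X_sub_C_pow (0 : ℂ) 1
  simpa using this

lemma ordAt_s_zero : ordAt (1 / RatFunc.X : RatFunc ℂ) 0 = -1 := by
  rw [s_rep, ordAt_rep one_ne_zero X_ne_zero, rm_X_zero,
    rootMultiplicity_eq_zero (p := (1:ℂ[X])) (by simp [IsRoot])]
  simp

lemma ordAt_rd_s_zero : ordAt (rd (1 / RatFunc.X : RatFunc ℂ)) 0 = -2 := by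
  rw [rd_s, ordAt_rep (by norm_num : (-1 : ℂ[X]) ≠ 0) (pow_ne_zero _ X_ne_zero),
    rootMultiplicity_eq_zero (p := (-1:ℂ[X])) (by simp [IsRoot])]
  have := rootMultiplicity_X_sub_C_pow (0 : ℂ) 2
  rw [map_zero, sub_zero] at this
  rw [this]
  simp

lemma rd_s_ne : rd (1 / RatFunc.X : RatFunc ℂ) ≠ 0 := by
  rw [rd_s]
  exact div_ne_zero (am_ne_zero (by norm_num)) (am_ne_zero (pow_ne_zero _ X_ne_zero))

lemma g_noncst {f : RatFunc ℂ} (hf : Noncst f) : Noncst (ratComp f (1 / RatFunc.X)) := by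
  intro c hc
  apply hf c
  apply fe_eq_iff
  have h1 : ∀ᶠ z in (cofinite : Filter ℂ), fe f z⁻¹ = c := by
    filter_upwards [ev_fe_ratComp s_noncst f, eventually_cofinite_ne (0 : ℂ)] with z h1 h2
    rw [← fe_s h2, ← h1, hc, fe_C]
  have h2 : ∀ᶠ z in (cofinite : Filter ℂ), fe f (z⁻¹)⁻¹ = c := ev_inv h1
  filter_upwards [h2, eventually_cofinite_ne (0 : ℂ)] with z hz h0
  rw [inv_inv] at hz
  rw [hz, fe_C]

lemma star_s {f q : RatFunc ℂ} (lam : ℂ) (hf : Noncst f)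
    (heig : ∀ᶠ z in (Filter.cofinite : Filter ℂ),
      fe q (fe f z) * (deriv (fe f) z) ^ 2 = lam * fe q z) :
    ratComp q (ratComp f (1 / RatFunc.X)) * rd (ratComp f (1 / RatFunc.X)) ^ 2 =
      RatFunc.C lam * (ratComp q (1 / RatFunc.X) * rd (1 / RatFunc.X) ^ 2) := by
  set g := ratComp f (1 / RatFunc.X) with hg
  have hgnc : Noncst g := g_noncst hf
  apply fe_eq_iff
  -- fe g z = fe f z⁻¹ eventually
  have hgev : ∀ᶠ z in (cofinite : Filter ℂ), fe g z = fe f z⁻¹ := by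
    filter_upwards [ev_fe_ratComp s_noncst f, eventually_cofinite_ne (0 : ℂ)] with z h1 h2
    rw [hg, h1, fe_s h2]
  -- deriv of fe g
  have hder0 : ∀ᶠ z in (cofinite : Filter ℂ), deriv (fe g) z = deriv (fun t => fe f t⁻¹) z :=
    deriv_congr_cofinite hgev
  have hder : ∀ᶠ z in (cofinite : Filter ℂ),
      deriv (fe g) z = deriv (fe f) z⁻¹ * (-(z ^ 2)⁻¹) := by
    filter_upwards [hder0, eventually_cofinite_ne (0 : ℂ), ev_inv (eventually_denom_ne f)]
      with z h1 h2 h3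
    rw [h1]
    have hdf : DifferentiableAt ℂ (fe f) z⁻¹ := by
      apply DifferentiableAt.div (f.num.differentiableAt) (f.denom.differentiableAt) h3
    have : (fun t : ℂ => fe f t⁻¹) = fe f ∘ Inv.inv := rfl
    rw [this, deriv_comp z hdf (differentiableAt_inv h2), deriv_inv]
  filter_upwards [ev_fe_ratComp hgnc q, ev_fe_mul (ratComp q g) (rd g ^ 2), ev_fe_pow (rd g) 2,
    eventually_denom_ne g, hgev, hder, ev_inv heig, eventually_cofinite_ne (0 : ℂ),
    ev_fe_mul (RatFunc.C lam) (ratComp q (1 / RatFunc.X) * rd (1 / RatFunc.X) ^ 2),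
    ev_fe_mul (ratComp q (1 / RatFunc.X)) (rd (1 / RatFunc.X) ^ 2),
    ev_fe_pow (rd (1 / RatFunc.X)) 2, ev_fe_ratComp s_noncst q]
    with z h1 h2 h3 h4 h5 h6 h7 h8 h9 h10 h11 h12
  rw [h2, h3, fe_rd g h4, h1, h5, h6, h9, fe_C, h10, h11, fe_rd_s h8, h12, fe_s h8]
  linear_combination ((z ^ 2)⁻¹) ^ 2 * h7

/-! ### Section 7 : structure of `ratComp f (1/X)` at 0 -/

noncomputable def flipPoly (P : ℂ[X]) (N : ℕ) : ℂ[X] :=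
  ∑ i ∈ P.support, monomial (N - i) (P.coeff i)

lemma flipPoly_coeff (P : ℂ[X]) {N : ℕ} (hN : P.natDegree ≤ N) (j : ℕ) :
    (flipPoly P N).coeff j = if j ≤ N then P.coeff (N - j) else 0 := by
  rw [flipPoly, finset_sum_coeff]
  by_cases hj : j ≤ N
  · rw [if_pos hj]
    rw [Finset.sum_eq_single (N - j)]
    · rcases Finset.decidableMem (N - j) P.support with hmem | hmem
      · rw [notMem_support_iff.mp hmem, coeff_monomial]
        split <;> simp
      · rw [coeff_monomial, if_pos (by omega)]
    · intro i hi hne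
      rw [coeff_monomial, if_neg]
      have := le_natDegree_of_mem_supp i hi
      omega
    · intro hmem
      rw [notMem_support_iff.mp hmem, coeff_monomial]
      split <;> simp
  · rw [if_neg hj]
    apply Finset.sum_eq_zero
    intro i hi
    rw [coeff_monomial, if_neg]
    have := le_natDegree_of_mem_supp i hi
    omega

lemma rm_zero_eq {p : ℂ[X]} (hp : p ≠ 0) {t : ℕ} (hlow : ∀ j < t, p.coeff j = 0)
    (ht : p.coeff t ≠ 0) : p.rootMultiplicity 0 = t := by
  have h1 : t ≤ p.rootMultiplicity 0 := by
    rw [le_rootMultiplicity_iff hp, map_zero, sub_zero]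
    exact X_pow_dvd_iff.mpr hlow
  have h2 : p.rootMultiplicity 0 ≤ t := by
    rw [rootMultiplicity_le_iff hp, map_zero, sub_zero]
    intro hdvd
    exact ht (X_pow_dvd_iff.mp hdvd t (Nat.lt_succ_self t))
  omega

lemma aeval_s_rep (P : ℂ[X]) {N : ℕ} (hN : P.natDegree ≤ N) :
    am (X ^ N) * aeval (1 / RatFunc.X : RatFunc ℂ) P = am (flipPoly P N) := by
  conv_lhs => rw [P.as_sum_support]
  rw [map_sum, Finset.mul_sum, flipPoly, map_sum]
  apply Finset.sum_congr rfl
  intro i hi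
  have hiN : i ≤ N := le_trans (le_natDegree_of_mem_supp i hi) hN
  rw [aeval_monomial, RatFunc.algebraMap_eq_C, s_rep, div_pow, map_one, one_pow,
    ← C_mul_X_pow_eq_monomial, map_mul, RatFunc.algebraMap_C, map_pow, RatFunc.algebraMap_X]
  rw [map_pow, RatFunc.algebraMap_X]
  have hXe : (RatFunc.X : RatFunc ℂ) ^ N = RatFunc.X ^ (N - i) * RatFunc.X ^ i := by
    rw [← pow_add]
    congr 1
    omega
  have hXne : (RatFunc.X : RatFunc ℂ) ^ i ≠ 0 :=
    pow_ne_zero _ (by rw [← RatFunc.algebraMap_X]; exact am_ne_zero X_ne_zero)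
  rw [hXe]
  field_simp

lemma g_rep {f : RatFunc ℂ} (hf : Noncst f) :
    ratComp f (1 / RatFunc.X) =
      am (flipPoly f.num (max f.num.natDegree f.denom.natDegree)) /
        am (flipPoly f.denom (max f.num.natDegree f.denom.natDegree)) := by
  set N := max f.num.natDegree f.denom.natDegree with hN
  have h1 := aeval_s_rep f.num (le_max_left f.num.natDegree f.denom.natDegree)
  have h2 := aeval_s_rep f.denom (le_max_right f.num.natDegree f.denom.natDegree)
  have hXN : am (X ^ N) ≠ 0 := am_ne_zero (pow_ne_zero _ X_ne_zero)
  rw [ratComp, ← h1, ← h2, mul_div_mul_left _ _ hXN]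

lemma flipPoly_num_ne {f : RatFunc ℂ} (hf : Noncst f) :
    flipPoly f.num (max f.num.natDegree f.denom.natDegree) ≠ 0 := by
  set N := max f.num.natDegree f.denom.natDegree with hN
  intro h0
  have := flipPoly_coeff f.num (le_max_left f.num.natDegree f.denom.natDegree)
    (N - f.num.natDegree)
  rw [h0, coeff_zero, if_pos (by omega)] at this
  have hco : f.num.coeff (N - (N - f.num.natDegree)) = f.num.leadingCoeff := by
    congr 1
    have := le_max_left f.num.natDegree f.denom.natDegree
    omega
  rw [hco] at this
  exact leadingCoeff_ne_zero.mpr (RatFunc.num_ne_zero hf.ne_zero) this.symm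

lemma flipPoly_den_ne (f : RatFunc ℂ) :
    flipPoly f.denom (max f.num.natDegree f.denom.natDegree) ≠ 0 := by
  set N := max f.num.natDegree f.denom.natDegree with hN
  intro h0
  have := flipPoly_coeff f.denom (le_max_right f.num.natDegree f.denom.natDegree)
    (N - f.denom.natDegree)
  rw [h0, coeff_zero, if_pos (by omega)] at this
  have hco : f.denom.coeff (N - (N - f.denom.natDegree)) = f.denom.leadingCoeff := by
    congr 1
    have := le_max_right f.num.natDegree f.denom.natDegree
    omega
  rw [hco] at this
  exact leadingCoeff_ne_zero.mpr (RatFunc.denom_ne_zero f) this.symm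

lemma flipPoly_rm {P : ℂ[X]} (hP : P ≠ 0) {N : ℕ} (hN : P.natDegree ≤ N) :
    (flipPoly P N).rootMultiplicity 0 = N - P.natDegree := by
  have hne : flipPoly P N ≠ 0 := by
    intro h0
    have := flipPoly_coeff P hN (N - P.natDegree)
    rw [h0, coeff_zero, if_pos (by omega)] at this
    have hco : P.coeff (N - (N - P.natDegree)) = P.leadingCoeff := by congr 1; omega
    rw [hco] at this
    exact leadingCoeff_ne_zero.mpr hP this.symm
  apply rm_zero_eq hne
  · intro j hj
    rw [flipPoly_coeff P hN, if_pos (by omega)]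
    apply coeff_eq_zero_of_natDegree_lt
    omega
  · rw [flipPoly_coeff P hN, if_pos (by omega)]
    have hco : P.coeff (N - (N - P.natDegree)) = P.leadingCoeff := by congr 1; omega
    rw [hco]
    exact leadingCoeff_ne_zero.mpr hP

lemma ordAt_g_zero {f : RatFunc ℂ} (hf : Noncst f) :
    ordAt (ratComp f (1 / RatFunc.X)) 0 =
      (f.denom.natDegree : ℤ) - (f.num.natDegree : ℤ) := by
  set N := max f.num.natDegree f.denom.natDegree with hN
  rw [g_rep hf, ordAt_rep (flipPoly_num_ne hf) (flipPoly_den_ne f),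
    flipPoly_rm (RatFunc.num_ne_zero hf.ne_zero) (le_max_left _ _),
    flipPoly_rm (RatFunc.denom_ne_zero f) (le_max_right _ _)]
  have h1 := le_max_left f.num.natDegree f.denom.natDegree
  have h2 := le_max_right f.num.natDegree f.denom.natDegree
  push_cast
  omega

lemma not_both_roots {g : RatFunc ℂ} (a : ℂ) : ¬ (g.num.eval a = 0 ∧ g.denom.eval a = 0) := by
  rintro ⟨h1, h2⟩
  obtain ⟨u, v, huv⟩ := RatFunc.isCoprime_num_denom g
  have := congrArg (eval a) huv
  simp [eval_add, eval_mul, h1, h2] at this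

lemma bridge {f : RatFunc ℂ} (hf : Noncst f) :
    ((ratComp f (1 / RatFunc.X)).denom.eval 0 = 0 ↔ f.denom.natDegree < f.num.natDegree) ∧
    (¬ f.denom.natDegree < f.num.natDegree →
      fe (ratComp f (1 / RatFunc.X)) 0 = f.num.coeff f.denom.natDegree / f.denom.leadingCoeff) := by
  set g := ratComp f (1 / RatFunc.X) with hgdef
  have hg0 : g ≠ 0 := (g_noncst hf).ne_zero
  have hord : ordAt g 0 = (f.denom.natDegree : ℤ) - (f.num.natDegree : ℤ) := ordAt_g_zero hf
  constructor
  · constructor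
    · intro hd0
      have hrmd : 1 ≤ g.denom.rootMultiplicity 0 :=
        (rootMultiplicity_pos (RatFunc.denom_ne_zero g)).mpr hd0
      have hnum0 : g.num.eval 0 ≠ 0 := fun h0 => not_both_roots 0 ⟨h0, hd0⟩
      have hrmn : g.num.rootMultiplicity 0 = 0 :=
        rootMultiplicity_eq_zero (by simpa [IsRoot] using hnum0)
      have : ordAt g 0 < 0 := by rw [ordAt, hrmn]; push_cast; omega
      omega
    · intro hlt
      by_contra hd0
      have hrmd : g.denom.rootMultiplicity 0 = 0 :=
        rootMultiplicity_eq_zero (by simpa [IsRoot] using hd0)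
      have : 0 ≤ ordAt g 0 := by rw [ordAt, hrmd]; push_cast; omega
      omega
  · intro hle
    have hN : max f.num.natDegree f.denom.natDegree = f.denom.natDegree :=
      max_eq_right (by omega)
    have hden0 : (flipPoly f.denom (max f.num.natDegree f.denom.natDegree)).eval 0 ≠ 0 := by
      rw [← coeff_zero_eq_eval_zero, flipPoly_coeff f.denom (le_max_right _ _) 0,
        if_pos (Nat.zero_le _), hN]
      exact leadingCoeff_ne_zero.mpr (RatFunc.denom_ne_zero f)
    have hfe := (feRep (g_rep hf) (flipPoly_den_ne f) hden0).2
    rw [hgdef, hfe, ← coeff_zero_eq_eval_zero, ← coeff_zero_eq_eval_zero,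
      flipPoly_coeff f.num (le_max_left _ _) 0, flipPoly_coeff f.denom (le_max_right _ _) 0,
      if_pos (Nat.zero_le _), if_pos (Nat.zero_le _), hN]
    rfl

/-! ### Section 8 : the sphere formula -/

lemma C_lam_ne {lam : ℂ} (hlam : lam ≠ 0) : RatFunc.C lam ≠ 0 := by
  rw [Ne, map_eq_zero_iff _ (RingHom.injective _)]
  exact hlam

lemma sphere_formula {f q : RatFunc ℂ} {lam : ℂ} (hq : q ≠ 0) (hlam : lam ≠ 0) (hf : Noncst f)
    (heig : ∀ᶠ z in (Filter.cofinite : Filter ℂ),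
      fe q (fe f z) * (deriv (fe f) z) ^ 2 = lam * fe q z) :
    ∀ x : OnePoint ℂ, 1 ≤ degAtSphere f x ∧
      qdOrd q x = (degAtSphere f x : ℤ) * (qdOrd q (evalSphere f x) + 2) - 2 := by
  have hstar := star_identity lam hf heig
  intro x
  cases x with
  | coe w =>
    obtain ⟨hd1, hmaster⟩ := master hq hf w
    have hordeq : ordAt (ratComp q f * rd f ^ 2) w = ordAt q w := by
      rw [hstar, ordAt_mul (C_lam_ne hlam) hq, ordAt_C]
      ring
    refine ⟨hd1, ?_⟩
    have hqd : qdOrd q (w : OnePoint ℂ) = ordAt q w := rfl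
    have hdeg : degAtSphere f (w : OnePoint ℂ) = degAt f w := rfl
    rw [hqd, hdeg, ← hordeq, hmaster]
    by_cases hpole : f.denom.eval w = 0
    · rw [if_pos hpole]
      have hev : evalSphere f (w : OnePoint ℂ) = ∞ := by
        show (if f.denom.eval w = 0 then ∞ else _) = ∞
        rw [if_pos hpole]
      rw [hev]
      rfl
    · rw [if_neg hpole]
      have hev : evalSphere f (w : OnePoint ℂ)
          = ((f.num.eval w / f.denom.eval w : ℂ) : OnePoint ℂ) := by
        show (if f.denom.eval w = 0 then ∞ else _) = _
        rw [if_neg hpole]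
      rw [hev]
      rfl
  | infty =>
    have hsstar := star_s lam hf heig
    obtain ⟨hd1, hmaster⟩ := master hq (g_noncst hf) 0
    -- order of the right side of star_s at 0
    have hvs : ordAt (1 / RatFunc.X : RatFunc ℂ) 0 = -((1:ℕ):ℤ) := by
      rw [ordAt_s_zero]; norm_num
    have hcomps : ordAt (ratComp q (1 / RatFunc.X)) 0 =
        (q.denom.natDegree : ℤ) - (q.num.natDegree : ℤ) := by
      rw [ratComp, ordAt_div (aeval_ne_zero s_noncst (RatFunc.num_ne_zero hq))
        (aeval_ne_zero s_noncst (RatFunc.denom_ne_zero q)),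
        ordAt_aeval_pole s_noncst le_rfl hvs q.num.natDegree q.num le_rfl (RatFunc.num_ne_zero hq),
        ordAt_aeval_pole s_noncst le_rfl hvs q.denom.natDegree q.denom le_rfl
          (RatFunc.denom_ne_zero q)]
      push_cast
      ring
    have hrhs : ordAt (RatFunc.C lam * (ratComp q (1 / RatFunc.X) * rd (1 / RatFunc.X) ^ 2)) 0
        = ordInfQD q := by
      rw [ordAt_mul (C_lam_ne hlam) (mul_ne_zero (ratComp_ne_zero hq s_noncst)
          (pow_ne_zero _ rd_s_ne)),
        ordAt_C, ordAt_mul (ratComp_ne_zero hq s_noncst) (pow_ne_zero _ rd_s_ne),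
        ordAt_pow rd_s_ne, ordAt_rd_s_zero, hcomps, ordInfQD]
      ring
    have hordeq : ordAt (ratComp q (ratComp f (1 / RatFunc.X)) * rd (ratComp f (1 / RatFunc.X)) ^ 2) 0
        = ordInfQD q := by rw [hsstar, hrhs]
    refine ⟨hd1, ?_⟩
    have hqd : qdOrd q (∞ : OnePoint ℂ) = ordInfQD q := rfl
    have hdeg : degAtSphere f (∞ : OnePoint ℂ) = degAt (ratComp f (1 / RatFunc.X)) 0 := rfl
    rw [hqd, hdeg, ← hordeq, hmaster]
    by_cases hb : f.denom.natDegree < f.num.natDegree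
    · rw [if_pos ((bridge hf).1.mpr hb)]
      have hev : evalSphere f (∞ : OnePoint ℂ) = ∞ := by
        show (if f.denom.natDegree < f.num.natDegree then ∞ else _) = ∞
        rw [if_pos hb]
      rw [hev]
      rfl
    · rw [if_neg (fun h0 => hb ((bridge hf).1.mp h0)), (bridge hf).2 hb]
      have hev : evalSphere f (∞ : OnePoint ℂ)
          = ((f.num.coeff f.denom.natDegree / f.denom.leadingCoeff : ℂ) : OnePoint ℂ) := by
        show (if f.denom.natDegree < f.num.natDegree then ∞ else _) = _
        rw [if_neg hb]
      rw [hev]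
      rfl

/-! ### Section 9 : counting the poles -/

lemma sum_ordAt (q : RatFunc ℂ) (hq : q ≠ 0) :
    ∑ a ∈ (q.num.roots.toFinset ∪ q.denom.roots.toFinset),
      ordAt q a = (q.num.natDegree : ℤ) - (q.denom.natDegree : ℤ) := by
  set T := q.num.roots.toFinset ∪ q.denom.roots.toFinset with hT
  have hsum : ∀ (p : ℂ[X]), p ≠ 0 → p.roots.toFinset ⊆ T →
      ∑ a ∈ T, (p.rootMultiplicity a : ℤ) = (p.natDegree : ℤ) := by
    intro p hp hsub
    have h1 : ∑ a ∈ T, (p.rootMultiplicity a : ℤ)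
        = ∑ a ∈ p.roots.toFinset, (p.rootMultiplicity a : ℤ) := by
      symm
      apply Finset.sum_subset hsub
      intro a _ ha
      have : ¬ p.IsRoot a := by
        intro hroot
        exact ha (by
          rw [Multiset.mem_toFinset, mem_roots hp]
          exact hroot)
      rw [rootMultiplicity_eq_zero this]
      simp
    rw [h1]
    have h2 : ∑ a ∈ p.roots.toFinset, p.rootMultiplicity a = p.roots.card := by
      conv_rhs => rw [← p.roots.toFinset_sum_count_eq]
      apply Finset.sum_congr rfl
      intro a _
      rw [p.count_roots]
    have h3 : p.roots.card = p.natDegree :=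
      Polynomial.splits_iff_card_roots.mp (IsAlgClosed.splits p)
    rw [← Nat.cast_sum]
    exact_mod_cast (h2.trans h3)
  have hnum := hsum q.num (RatFunc.num_ne_zero hq) Finset.subset_union_left
  have hden := hsum q.denom (RatFunc.denom_ne_zero q) Finset.subset_union_right
  have : ∑ a ∈ T, ordAt q a
      = ∑ a ∈ T, ((q.num.rootMultiplicity a : ℤ) - (q.denom.rootMultiplicity a : ℤ)) := rfl
  rw [this, Finset.sum_sub_distrib, hnum, hden]

lemma pole_count {q : RatFunc ℂ} (hq : q ≠ 0)
    (hords : ∀ x : OnePoint ℂ, qdOrd q x = -1 ∨ qdOrd q x = 0) :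
    ({x : OnePoint ℂ | qdOrd q x = -1}.encard = 4) := by
  classical
  set T : Finset ℂ := q.num.roots.toFinset ∪ q.denom.roots.toFinset with hT
  set T' : Finset (OnePoint ℂ) := insert ∞ (T.image OnePoint.some) with hT'
  have hout : ∀ x : OnePoint ℂ, x ∉ T' → qdOrd q x = 0 := by
    intro x hx
    cases x with
    | infty => exact absurd (Finset.mem_insert_self _ _) hx
    | coe a =>
      have haT : a ∉ T := by
        intro ha
        exact hx (Finset.mem_insert_of_mem (Finset.mem_image_of_mem OnePoint.some ha))
      have h1 : ¬ q.num.IsRoot a := by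
        intro hroot
        exact haT (Finset.mem_union_left _ (by
          rw [Multiset.mem_toFinset, mem_roots (RatFunc.num_ne_zero hq)]; exact hroot))
      have h2 : ¬ q.denom.IsRoot a := by
        intro hroot
        exact haT (Finset.mem_union_right _ (by
          rw [Multiset.mem_toFinset, mem_roots (RatFunc.denom_ne_zero q)]; exact hroot))
      show ordAt q a = 0
      rw [ordAt, rootMultiplicity_eq_zero h1, rootMultiplicity_eq_zero h2]
      simp
  have hsumT' : ∑ x ∈ T', qdOrd q x = -4 := by
    rw [hT', Finset.sum_insert (by
      intro hmem
      obtain ⟨a, _, ha⟩ := Finset.mem_image.mp hmem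
      exact Option.some_ne_none a ha)]
    rw [Finset.sum_image (fun a _ b _ h => OnePoint.coe_injective h)]
    have h1 : ∀ a ∈ T, qdOrd q (a : OnePoint ℂ) = ordAt q a := fun a _ => rfl
    rw [Finset.sum_congr rfl h1, sum_ordAt q hq]
    show ordInfQD q + _ = -4
    rw [ordInfQD]
    ring
  set T1 : Finset (OnePoint ℂ) := T'.filter (fun x => qdOrd q x = -1) with hT1
  have hsplit : ∑ x ∈ T', qdOrd q x = -(T1.card : ℤ) := by
    rw [← Finset.sum_filter_add_sum_filter_not T' (fun x => qdOrd q x = -1)]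
    have hA : ∑ x ∈ T'.filter (fun x => qdOrd q x = -1), qdOrd q x = -(T1.card : ℤ) := by
      rw [Finset.sum_congr rfl (fun x hx => (Finset.mem_filter.mp hx).2)]
      simp [hT1]
    have hB : ∑ x ∈ T'.filter (fun x => ¬ qdOrd q x = -1), qdOrd q x = 0 := by
      apply Finset.sum_eq_zero
      intro x hx
      rcases hords x with h | h
      · exact absurd h (Finset.mem_filter.mp hx).2
      · exact h
    rw [hA, hB, add_zero]
  have hcard : T1.card = 4 := by
    have := hsumT'
    rw [hsplit] at this
    omega
  have hSet : {x : OnePoint ℂ | qdOrd q x = -1} = (T1 : Set (OnePoint ℂ)) := by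
    ext x
    simp only [Set.mem_setOf_eq, Finset.coe_filter, Set.mem_setOf_eq, hT1]
    constructor
    · intro hx
      refine ⟨?_, hx⟩
      by_contra hmem
      rw [hout x hmem] at hx
      norm_num at hx
    · exact fun h => h.2
  rw [hSet, Set.encard_coe_eq_coe_finsetCard, hcard]
  rfl

lemma lattes_arith {a b : ℤ} {d : ℕ} (hf : a = d * (b + 2) - 2)
    (ha : a = -1 ∨ a = 0) (hb : b = -1 ∨ b = 0) :
    (a = -1 → b = -1) ∧ (b = -1 → (a = -1 ∨ d = 2)) ∧ (2 ≤ d → b = -1) ∧ (2 ≤ d → a ≠ -1) := by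
  rcases ha with rfl|rfl <;> rcases hb with h|h <;> rw [h] at hf ⊢ <;> norm_num at hf ⊢ <;> omega

/-- Let `f` be a rational map of degree `D > 1` and `q ≠ 0` a meromorphic
quadratic differential with `f^*q = λq`, `λ ≠ 0`, with no zeros and at worst simple poles.
Then `q` has exactly four poles; the pole set is forward invariant; every preimage of a pole
is a pole or a simple critical point; every critical value is a pole; and no critical point
is a pole. -/
theorem lattes_characterization (f q : RatFunc ℂ) (lam : ℂ) (D : ℕ)
    (hD : D = max f.num.natDegree f.denom.natDegree) (hD1 : 1 < D)
    (hq0 : q ≠ 0) (hlam : lam ≠ 0)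
    (heig : ∀ᶠ z in (Filter.cofinite : Filter ℂ),
      fe q (fe f z) * (deriv (fe f) z) ^ 2 = lam * fe q z)
    (hords : ∀ x : OnePoint ℂ, qdOrd q x = -1 ∨ qdOrd q x = 0) :
    ({x : OnePoint ℂ | qdOrd q x = -1}.encard = 4) ∧
    (∀ x : OnePoint ℂ, qdOrd q x = -1 → qdOrd q (evalSphere f x) = -1) ∧
    (∀ w : OnePoint ℂ, qdOrd q (evalSphere f w) = -1 →
      qdOrd q w = -1 ∨ degAtSphere f w = 2) ∧
    (∀ w : OnePoint ℂ, 2 ≤ degAtSphere f w → qdOrd q (evalSphere f w) = -1) ∧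
    (∀ w : OnePoint ℂ, 2 ≤ degAtSphere f w → qdOrd q w ≠ -1) := by
  have hf : Noncst f := noncst_of_deg (by omega)
  have hform := sphere_formula hq0 hlam hf heig
  have key : ∀ x : OnePoint ℂ,
      (qdOrd q x = -1 → qdOrd q (evalSphere f x) = -1) ∧
      (qdOrd q (evalSphere f x) = -1 → (qdOrd q x = -1 ∨ degAtSphere f x = 2)) ∧
      (2 ≤ degAtSphere f x → qdOrd q (evalSphere f x) = -1) ∧
      (2 ≤ degAtSphere f x → qdOrd q x ≠ -1) := by
    intro x
    exact lattes_arith (hform x).2 (hords x) (hords (evalSphere f x))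
  exact ⟨pole_count hq0 hords, fun x => (key x).1, fun x => (key x).2.1,
    fun x => (key x).2.2.1, fun x => (key x).2.2.2⟩
end
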